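/- arXiv:2404.10962 — 9 statements merged into one kernel-verified Lean document; each statement's English description precedes it below -/
import Mathlib

section
/- For every finite simple graph G, the number of dominating sets of G is odd. -/
open SimpleGraph

/-- `D` is a dominating set of `G`: every vertex not in `D` has a neighbour in `D`. -/
def IsDomSet {V : Type*} (G : SimpleGraph V) (D : Set V) : Prop :=
  ∀ v ∉ D, ∃ u ∈ D, G.Adj u v

/-- The dominating graph of `G`: vertices are dominating sets of `G`, two dominating
sets are adjacent iff their symmetric difference has exactly one element. -/
def DomGraph {V : Type*} (G : SimpleGraph V) :
    SimpleGraph {D : Set V // IsDomSet G D} where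
  Adj A B := (symmDiff A.1 B.1).ncard = 1
  symm := ⟨fun A B h => by
    have h' : (symmDiff A.1 B.1).ncard = 1 := h
    show (symmDiff B.1 A.1).ncard = 1
    rwa [symmDiff_comm]⟩
  loopless := ⟨fun A h => by
    have h' : (symmDiff A.1 A.1).ncard = 1 := h
    simp [symmDiff_self, Set.bot_eq_empty] at h'⟩

/-- The `k`-dominating graph of `G`: vertices are dominating sets of `G` of cardinality
at most `k`, two such sets are adjacent iff their symmetric difference has exactly one
element. -/
def KDomGraph {V : Type*} (G : SimpleGraph V) (k : ℕ) :
    SimpleGraph {D : Set V // IsDomSet G D ∧ D.ncard ≤ k} where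
  Adj A B := (symmDiff A.1 B.1).ncard = 1
  symm := ⟨fun A B h => by
    have h' : (symmDiff A.1 B.1).ncard = 1 := h
    show (symmDiff B.1 A.1).ncard = 1
    rwa [symmDiff_comm]⟩
  loopless := ⟨fun A h => by
    have h' : (symmDiff A.1 A.1).ncard = 1 := h
    simp [symmDiff_self, Set.bot_eq_empty] at h'⟩

/-- A graph is Eulerian iff every vertex has even degree and any two edges lie in the
same connected component (i.e. at most one component contains an edge). -/
def IsEulerian {W : Type*} (H : SimpleGraph W) : Prop :=
  (∀ v : W, Even (H.neighborSet v).ncard) ∧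
  ∀ u v x y : W, H.Adj u v → H.Adj x y → H.Reachable u x

namespace DomOdd

open Finset

variable {V : Type*} [Fintype V] [DecidableEq V] (G : SimpleGraph V) [DecidableRel G.Adj]

def r (G : SimpleGraph V) (d u : V) : Prop := d = u ∨ G.Adj d u

instance : DecidableRel (r G) := fun d u => inferInstanceAs (Decidable (d = u ∨ G.Adj d u))

lemma r_symm (d u : V) : r G d u ↔ r G u d := by
  unfold r
  rw [eq_comm, G.adj_comm]

def nbr (x : V) : Finset V := univ.filter (fun d => r G d x)

def domP (U D : Finset V) : Prop := ∀ u ∈ U, ∃ d ∈ D, r G d u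

instance (U : Finset V) : DecidablePred (domP G U) :=
  fun D => inferInstanceAs (Decidable (∀ u ∈ U, ∃ d ∈ D, r G d u))

def t (W U : Finset V) : ℕ := (W.powerset.filter (domP G U)).card

lemma t_rec {U : Finset V} {x : V} (hx : x ∈ U) (W : Finset V) :
    t G W U + t G (W \ nbr G x) (U.erase x) = t G W (U.erase x) := by
  have h1 : W.powerset.filter (domP G U) =
      (W.powerset.filter (domP G (U.erase x))).filter (fun D => ∃ d ∈ D, r G d x) := by
    ext D
    simp only [mem_filter, mem_powerset, and_assoc]
    refine and_congr_right fun _ => ?_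
    constructor
    · intro h
      exact ⟨fun u hu => h u (mem_of_mem_erase hu), h x hx⟩
    · rintro ⟨h1, h2⟩ u hu
      rcases eq_or_ne u x with rfl | hne
      · exact h2
      · exact h1 u (mem_erase.2 ⟨hne, hu⟩)
  have h2 : (W \ nbr G x).powerset.filter (domP G (U.erase x)) =
      (W.powerset.filter (domP G (U.erase x))).filter (fun D => ¬ ∃ d ∈ D, r G d x) := by
    ext D
    simp only [mem_filter, mem_powerset, subset_sdiff, Finset.disjoint_left, nbr, mem_filter,
      mem_univ, true_and, not_exists]
    tauto
  unfold t
  rw [h1, h2]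
  exact card_filter_add_card_filter_not _

def q (D S : Finset V) : Prop := ∀ d ∈ D, ∀ s ∈ S, ¬ r G d s

instance (D : Finset V) : DecidablePred (q G D) :=
  fun S => inferInstanceAs (Decidable (∀ d ∈ D, ∀ s ∈ S, ¬ r G d s))

lemma q_symm (D S : Finset V) : q G D S ↔ q G S D := by
  unfold q
  constructor <;> intro h a ha b hb hr <;> exact h b hb a ha ((r_symm G _ _).mp hr)

def p (W U : Finset V) : ℕ :=
  ∑ D ∈ W.powerset, ∑ S ∈ U.powerset, if q G D S then 1 else 0

lemma p_symm (W U : Finset V) : p G W U = p G U W := by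
  unfold p
  rw [Finset.sum_comm]
  exact Finset.sum_congr rfl fun S _ => Finset.sum_congr rfl fun D _ => by
    rw [if_congr (q_symm G D S) rfl rfl]

lemma inner_eq (U D : Finset V) :
    (∑ S ∈ U.powerset, if q G D S then 1 else 0)
      = 2 ^ (U.filter fun u => ∀ d ∈ D, ¬ r G d u).card := by
  rw [← Finset.card_filter]
  have h : U.powerset.filter (q G D) = (U.filter fun u => ∀ d ∈ D, ¬ r G d u).powerset := by
    ext S
    simp only [mem_filter, mem_powerset, subset_iff, mem_filter]
    unfold q
    constructor
    · rintro ⟨hS, hq⟩ s hs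
      exact ⟨hS hs, fun d hd => hq d hd s hs⟩
    · intro h
      exact ⟨fun s hs => (h hs).1, fun d hd s hs => (h hs).2 d hd⟩
  rw [h, card_powerset]

lemma p_mod (W U : Finset V) : p G W U % 2 = t G W U % 2 := by
  unfold p t
  rw [Finset.card_filter, Finset.sum_nat_mod, Finset.sum_nat_mod _ 2 (fun D => if domP G U D then 1 else 0)]
  congr 1
  refine Finset.sum_congr rfl fun D _ => ?_
  rw [inner_eq]
  have hiff : (U.filter fun u => ∀ d ∈ D, ¬ r G d u).card = 0 ↔ domP G U D := by
    rw [card_eq_zero, filter_eq_empty_iff]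
    unfold domP
    constructor
    · intro h u hu
      have := h hu
      push_neg at this
      exact this
    · intro h u hu hc
      obtain ⟨d, hd, hr⟩ := h u hu
      exact hc d hd hr
  by_cases hd : domP G U D
  · rw [hiff.mpr hd, if_pos hd]
    rfl
  · rw [if_neg hd]
    obtain ⟨k, hk⟩ := Nat.exists_eq_succ_of_ne_zero (fun h0 => hd (hiff.mp h0))
    rw [hk]
    simp [pow_succ, Nat.mul_mod]

lemma t_symm (W U : Finset V) : t G W U % 2 = t G U W % 2 := by
  rw [← p_mod, ← p_mod, p_symm]

lemma t_diag_odd (W : Finset V) : t G W W % 2 = 1 := by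
  induction W using Finset.strongInduction with
  | _ W ih =>
    rcases W.eq_empty_or_nonempty with rfl | ⟨x, hx⟩
    · unfold t domP
      simp
    · have A := t_rec G hx W
      have B := t_rec G hx (W.erase x)
      have C : (W.erase x) \ nbr G x = W \ nbr G x := by
        ext d
        simp only [mem_sdiff, mem_erase, nbr, mem_filter, mem_univ, true_and]
        unfold r
        tauto
      rw [C] at B
      have D := t_symm G W (W.erase x)
      have E := t_symm G (W.erase x) W
      have IH := ih (W.erase x) (Finset.erase_ssubset hx)
      omega

end DomOdd


/-- The number of dominating sets of a finite graph is odd. -/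
theorem dominating_sets_odd {V : Type*} [Fintype V] (G : SimpleGraph V) :
    Odd (Nat.card {D : Set V // IsDomSet G D}) := by
  classical
  have key : DomOdd.t G Finset.univ Finset.univ % 2 = 1 := DomOdd.t_diag_odd G Finset.univ
  have e : {D : Finset V // DomOdd.domP G Finset.univ D} ≃ {D : Set V // IsDomSet G D} := by
    refine Equiv.subtypeEquiv Fintype.finsetEquivSet fun D => ?_
    simp only [Fintype.finsetEquivSet, Equiv.coe_fn_mk]
    unfold IsDomSet DomOdd.domP DomOdd.r
    constructor
    · intro h v hv
      obtain ⟨d, hd, hr⟩ := h v (Finset.mem_univ v)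
      rcases hr with rfl | hadj
      · exact absurd (Finset.mem_coe.mpr hd) hv
      · exact ⟨d, Finset.mem_coe.mpr hd, hadj⟩
    · intro h u _
      by_cases hu : u ∈ D
      · exact ⟨u, hu, Or.inl rfl⟩
      · obtain ⟨w, hw, hadj⟩ := h u (fun hc => hu (Finset.mem_coe.mp hc))
        exact ⟨w, Finset.mem_coe.mp hw, Or.inr hadj⟩
  have hcard : Nat.card {D : Set V // IsDomSet G D} = DomOdd.t G Finset.univ Finset.univ := by
    rw [← Nat.card_congr e, Nat.card_eq_fintype_card, Fintype.card_subtype, DomOdd.t,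
      Finset.powerset_univ]
  rw [hcard]
  exact Nat.odd_iff.mpr key
end

section
/- For every finite simple graph G, the dominating graph D(G) has at least one vertex of even degree. -/
open SimpleGraph

section Aux

open Finset

variable {V : Type*} [Fintype V] [DecidableEq V] (G : SimpleGraph V) [DecidableRel G.Adj]

/-- closed neighborhood of a finset -/
private def clo (s : Finset V) : Finset V :=
  univ.filter (fun v => v ∈ s ∨ ∃ u ∈ s, G.Adj u v)

private lemma mem_clo {s : Finset V} {v : V} :
    v ∈ clo G s ↔ v ∈ s ∨ ∃ u ∈ s, G.Adj u v := by
  simp [clo]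

private lemma subset_clo (s : Finset V) : s ⊆ clo G s := fun v hv =>
  (mem_clo G).2 (Or.inl hv)

private lemma isDomSet_iff_clo (s : Finset V) :
    IsDomSet G (↑s : Set V) ↔ clo G s = univ := by
  constructor
  · intro h
    apply Finset.eq_univ_of_forall
    intro v
    rw [mem_clo]
    by_cases hv : v ∈ s
    · exact Or.inl hv
    · obtain ⟨u, hu, hadj⟩ := h v (by simpa using hv)
      exact Or.inr ⟨u, by simpa using hu, hadj⟩
  · intro h v hv
    have := (mem_clo G).1 (h ▸ mem_univ v)
    rcases this with h1 | ⟨u, hu, hadj⟩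
    · exact absurd h1 (by simpa using hv)
    · exact ⟨u, by simpa using hu, hadj⟩

private lemma disjoint_clo_symm (s t : Finset V) :
    Disjoint t (clo G s) ↔ Disjoint s (clo G t) := by
  have key : ∀ a b : Finset V, Disjoint b (clo G a) ↔
      ∀ u ∈ a, ∀ v ∈ b, u ≠ v ∧ ¬ G.Adj u v := by
    intro a b
    rw [Finset.disjoint_left]
    constructor
    · intro h u hu v hv
      constructor
      · rintro rfl
        exact h hv ((mem_clo G).2 (Or.inl hu))
      · intro hadj
        exact h hv ((mem_clo G).2 (Or.inr ⟨u, hu, hadj⟩))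
    · intro h v hv hvc
      rcases (mem_clo G).1 hvc with h1 | ⟨u, hu, hadj⟩
      · exact (h v h1 v hv).1 rfl
      · exact (h u hu v hv).2 hadj
  rw [key, key]
  constructor <;> intro h u hu v hv <;>
    exact ⟨(h v hv u hu).1.symm, fun hadj => (h v hv u hu).2 hadj.symm⟩

private lemma card_disjoint_filter (s : Finset V)
    [DecidablePred fun t : Finset V => Disjoint t (clo G s)] :
    (univ.filter (fun t : Finset V => Disjoint t (clo G s))).card
      = 2 ^ ((clo G s)ᶜ.card) := by
  rw [← Finset.card_powerset]
  congr 1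
  ext t
  simp only [Finset.mem_powerset, Finset.mem_filter, Finset.mem_univ, true_and]
  exact le_compl_iff_disjoint_right.symm

open scoped Classical in
private lemma odd_card_domFinsets :
    Odd ((univ.filter (fun s : Finset V => IsDomSet G (↑s : Set V))).card) := by
  classical
  have key : (((univ.filter (fun s : Finset V => IsDomSet G (↑s : Set V))).card : ZMod 2)) = 1 := by
    have step1 : (((univ.filter (fun s : Finset V => IsDomSet G (↑s : Set V))).card : ZMod 2))
        = ∑ s : Finset V, (if clo G s = univ then (1 : ZMod 2) else 0) := by
      rw [Finset.card_filter]
      push_cast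
      refine Finset.sum_congr rfl (fun s _ => ?_)
      exact if_congr (isDomSet_iff_clo G s) rfl rfl
    have step2 : ∀ s : Finset V,
        (if clo G s = univ then (1 : ZMod 2) else 0)
          = ((univ.filter (fun t : Finset V => Disjoint t (clo G s))).card : ZMod 2) := by
      intro s
      rw [card_disjoint_filter]
      by_cases h : clo G s = univ
      · have : ((clo G s)ᶜ).card = 0 := by
          simp [h]
        rw [this]
        simp [h]
      · have hne : ((clo G s)ᶜ).card ≠ 0 := fun hc => h (by
          have h0 : (clo G s)ᶜ = ∅ := Finset.card_eq_zero.1 hc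
          rwa [Finset.compl_eq_empty_iff] at h0)
        obtain ⟨m, hm⟩ := Nat.exists_eq_succ_of_ne_zero hne
        rw [hm, if_neg h]
        push_cast
        simp [pow_succ, CharTwo.two_eq_zero]
    have step3 : (∑ s : Finset V, (if clo G s = univ then (1 : ZMod 2) else 0))
        = ∑ p ∈ univ ×ˢ (univ : Finset (Finset V)),
            (if Disjoint p.2 (clo G p.1) then (1 : ZMod 2) else 0) := by
      rw [Finset.sum_product]
      refine Finset.sum_congr rfl (fun s _ => ?_)
      rw [step2 s, Finset.card_filter]
      push_cast
      rfl
    have step4 : (∑ p ∈ univ ×ˢ (univ : Finset (Finset V)),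
            (if Disjoint p.2 (clo G p.1) then (1 : ZMod 2) else 0)) = 1 := by
      rw [← Finset.diag_union_offDiag, Finset.sum_union (Finset.disjoint_diag_offDiag _)]
      have hdiag : (∑ p ∈ (univ : Finset (Finset V)).diag,
          (if Disjoint p.2 (clo G p.1) then (1 : ZMod 2) else 0)) = 1 := by
        rw [Finset.sum_diag]
        have : ∀ s : Finset V, Disjoint s (clo G s) ↔ s = ∅ := by
          intro s
          constructor
          · intro h
            have := Finset.disjoint_of_subset_right (subset_clo G s) h
            simpa using this
          · rintro rfl; simp
        calc (∑ s : Finset V, (if Disjoint s (clo G s) then (1 : ZMod 2) else 0))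
            = ∑ s : Finset V, (if s = ∅ then (1 : ZMod 2) else 0) :=
              Finset.sum_congr rfl (fun s _ => if_congr (this s) rfl rfl)
          _ = 1 := by simp
      have hoff : (∑ p ∈ (univ : Finset (Finset V)).offDiag,
          (if Disjoint p.2 (clo G p.1) then (1 : ZMod 2) else 0)) = 0 := by
        apply Finset.sum_involution (g := fun p _ => (p.2, p.1))
        · intro p hp
          have heq : (if Disjoint p.2 (clo G p.1) then (1 : ZMod 2) else 0)
              = (if Disjoint p.1 (clo G p.2) then (1 : ZMod 2) else 0) :=
            if_congr (disjoint_clo_symm G p.1 p.2) rfl rfl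
          rw [heq]
          by_cases h : Disjoint p.1 (clo G p.2) <;> simp [h, CharTwo.add_self_eq_zero]
        · intro p hp _
          have := (Finset.mem_offDiag.1 hp).2.2
          intro hc
          exact this (congrArg Prod.snd hc ▸ (congrArg Prod.fst hc).symm ▸ rfl)
        · intro p hp
          rcases Finset.mem_offDiag.1 hp with ⟨h1, h2, h3⟩
          exact Finset.mem_offDiag.2 ⟨h2, h1, fun h => h3 h.symm⟩
        · intro p hp; rfl
      rw [hdiag, hoff, add_zero]
    rw [step1, step3, step4]
  -- conclude oddness from the ZMod 2 identity
  rw [Nat.odd_iff]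
  by_contra h
  have h2 : 2 ∣ (univ.filter (fun s : Finset V => IsDomSet G (↑s : Set V))).card := by
    omega
  have h0 := (ZMod.natCast_eq_zero_iff _ 2).2 h2
  rw [key] at h0
  exact one_ne_zero h0

end Aux

open scoped Classical in
private lemma odd_card_domSets {V : Type*} [Fintype V] (G : SimpleGraph V) :
    Odd (Fintype.card {D : Set V // IsDomSet G D}) := by
  classical
  have e : {D : Set V // IsDomSet G D} ≃ {s : Finset V // IsDomSet G (↑s : Set V)} := by
    refine ⟨fun D => ⟨D.1.toFinset, ?_⟩, fun s => ⟨(↑s.1 : Set V), s.2⟩, ?_, ?_⟩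
    · rw [Set.coe_toFinset]; exact D.2
    · intro D; ext v; simp
    · intro s; ext v; simp
  have hc : Fintype.card {D : Set V // IsDomSet G D}
      = (Finset.univ.filter (fun s : Finset V => IsDomSet G (↑s : Set V))).card := by
    rw [Fintype.card_congr e]
    exact Fintype.card_subtype _
  rw [hc]
  exact odd_card_domFinsets G

/-- The dominating graph of a finite graph has at least one vertex of even degree. -/
theorem domGraph_exists_even_degree {V : Type*} [Fintype V] (G : SimpleGraph V) :
    ∃ d : {D : Set V // IsDomSet G D}, Even ((DomGraph G).neighborSet d).ncard := by
  classical
  by_contra h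
  push_neg at h
  -- all degrees odd
  have hodd : ∀ d : {D : Set V // IsDomSet G D}, Odd ((DomGraph G).degree d) := by
    intro d
    have hnc : ((DomGraph G).neighborSet d).ncard = (DomGraph G).degree d := by
      rw [Set.ncard_eq_toFinset_card', SimpleGraph.degree]
      congr 1
    have := h d
    rw [hnc] at this
    exact Nat.not_even_iff_odd.1 this
  -- sum of degrees is even (handshake)
  have hsum : (∑ d : {D : Set V // IsDomSet G D}, (DomGraph G).degree d)
      = 2 * (DomGraph G).edgeFinset.card := SimpleGraph.sum_degrees_eq_twice_card_edges _
  -- in ZMod 2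
  have hz : ((∑ d : {D : Set V // IsDomSet G D}, (DomGraph G).degree d : ℕ) : ZMod 2) = 0 := by
    rw [hsum]; push_cast; ring_nf; simp [CharTwo.two_eq_zero]
  have hz2 : ((∑ d : {D : Set V // IsDomSet G D}, (DomGraph G).degree d : ℕ) : ZMod 2)
      = ((Fintype.card {D : Set V // IsDomSet G D} : ℕ) : ZMod 2) := by
    push_cast
    rw [Fintype.card, Finset.card_eq_sum_ones]
    push_cast
    refine Finset.sum_congr rfl (fun d _ => ?_)
    obtain ⟨k, hk⟩ := hodd d
    rw [hk]
    push_cast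
    ring_nf
    simp [CharTwo.two_eq_zero]
  have hcard := odd_card_domSets G
  rw [Nat.odd_iff] at hcard
  have : ((Fintype.card {D : Set V // IsDomSet G D} : ℕ) : ZMod 2) = 1 := by
    rw [← Nat.mod_add_div (Fintype.card {D : Set V // IsDomSet G D}) 2, hcard]
    push_cast
    simp [CharTwo.two_eq_zero]
  rw [hz2, this] at hz
  exact one_ne_zero hz
end

section
/- Let G and H be finite simple graphs on disjoint vertex sets and let G ⊔ H denote their disjoint union. Then the dominating graph D(G ⊔ H) is isomorphic to the Cartesian (box) product D(G) □ D(H). -/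
open SimpleGraph

section myaux
variable {α β : Type*}

lemma myNcard_sum [Fintype α] [Fintype β] (S : Set (α ⊕ β)) :
    S.ncard = (Sum.inl ⁻¹' S).ncard + (Sum.inr ⁻¹' S).ncard := by
  conv_lhs => rw [← Set.image_preimage_inl_union_image_preimage_inr S]
  rw [Set.ncard_union_eq, Set.ncard_image_of_injective _ Sum.inl_injective,
    Set.ncard_image_of_injective _ Sum.inr_injective]
  exact Set.disjoint_left.2 (by rintro _ ⟨a, _, rfl⟩ ⟨b, _, h⟩; cases h)

lemma myNcard_symmDiff_zero {γ : Type*} [Fintype γ] (S T : Set γ) :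
    (symmDiff S T).ncard = 0 ↔ S = T := by
  rw [Set.ncard_eq_zero (Set.toFinite _), ← Set.bot_eq_empty, symmDiff_eq_bot]

lemma myIsDomSet_sum_iff (G : SimpleGraph α) (H : SimpleGraph β) (D : Set (α ⊕ β)) :
    IsDomSet (G ⊕g H) D ↔ IsDomSet G (Sum.inl ⁻¹' D) ∧ IsDomSet H (Sum.inr ⁻¹' D) := by
  constructor
  · intro h
    refine ⟨fun v hv => ?_, fun v hv => ?_⟩
    · obtain ⟨u, hu, hadj⟩ := h (Sum.inl v) hv
      cases u with
      | inl u => exact ⟨u, hu, hadj⟩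
      | inr u => simp at hadj
    · obtain ⟨u, hu, hadj⟩ := h (Sum.inr v) hv
      cases u with
      | inl u => simp at hadj
      | inr u => exact ⟨u, hu, hadj⟩
  · rintro ⟨hG, hH⟩ v hv
    cases v with
    | inl v => obtain ⟨u, hu, h⟩ := hG v hv; exact ⟨Sum.inl u, hu, h⟩
    | inr v => obtain ⟨u, hu, h⟩ := hH v hv; exact ⟨Sum.inr u, hu, h⟩

lemma myKey [Fintype α] [Fintype β] (D D' : Set (α ⊕ β)) :
    (symmDiff D D').ncard = 1 ↔
      ((symmDiff (Sum.inl ⁻¹' D) (Sum.inl ⁻¹' D')).ncard = 1 ∧ Sum.inr ⁻¹' D = Sum.inr ⁻¹' D')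
      ∨ (Sum.inl ⁻¹' D = Sum.inl ⁻¹' D' ∧
          (symmDiff (Sum.inr ⁻¹' D) (Sum.inr ⁻¹' D')).ncard = 1) := by
  rw [myNcard_sum, Set.preimage_symmDiff, Set.preimage_symmDiff,
    ← myNcard_symmDiff_zero (Sum.inr ⁻¹' D), ← myNcard_symmDiff_zero (Sum.inl ⁻¹' D)]
  omega

end myaux

/-- The dominating graph of a disjoint union is isomorphic to the box product of the
dominating graphs. -/
theorem domGraph_sum_iso_boxProd {α β : Type*} [Fintype α] [Fintype β]
    (G : SimpleGraph α) (H : SimpleGraph β) :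
    Nonempty (DomGraph (G ⊕g H) ≃g (DomGraph G □ DomGraph H)) := by
  refine ⟨{ toFun := fun D => (⟨Sum.inl ⁻¹' D.1, ((myIsDomSet_sum_iff G H D.1).1 D.2).1⟩,
              ⟨Sum.inr ⁻¹' D.1, ((myIsDomSet_sum_iff G H D.1).1 D.2).2⟩),
            invFun := fun P => ⟨Sum.inl '' P.1.1 ∪ Sum.inr '' P.2.1, ?_⟩,
            left_inv := fun D =>
              Subtype.ext (Set.image_preimage_inl_union_image_preimage_inr D.1),
            right_inv := fun P => ?_,
            map_rel_iff' := @fun A B => ?_ }⟩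
  · rw [myIsDomSet_sum_iff]
    constructor
    · convert P.1.2 using 1
      simp [Set.preimage_union, Set.preimage_image_eq _ Sum.inl_injective,
        Set.preimage_inl_image_inr]
    · convert P.2.2 using 1
      simp [Set.preimage_union, Set.preimage_image_eq _ Sum.inr_injective,
        Set.preimage_inr_image_inl]
  · refine Prod.ext (Subtype.ext ?_) (Subtype.ext ?_) <;>
      simp [Set.preimage_union, Set.preimage_image_eq _ Sum.inl_injective,
        Set.preimage_image_eq _ Sum.inr_injective,
        Set.preimage_inl_image_inr, Set.preimage_inr_image_inl]
  · show (DomGraph G □ DomGraph H).Adj _ _ ↔ (symmDiff A.1 B.1).ncard = 1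
    rw [boxProd_adj, myKey]
    simp [DomGraph, Subtype.ext_iff]
    tauto
end

section
/- Let G and H be finite simple graphs on disjoint vertex sets and let G ⊔ H denote their disjoint union. Then the dominating graph D(G ⊔ H) is Eulerian if and only if both D(G) and D(H) are Eulerian. -/
open SimpleGraph

set_option linter.unusedSectionVars false

section Aux

open Finset

-- Isomorphism invariance of `IsEulerian`
lemma neighborSet_map {V W : Type*} {P : SimpleGraph V} {Q : SimpleGraph W} (e : P ≃g Q) (v : V) :
    Q.neighborSet (e v) = ⇑e '' P.neighborSet v := by
  ext w
  simp only [mem_neighborSet, Set.mem_image]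
  constructor
  · intro h
    exact ⟨e.symm w, by rwa [← e.map_adj_iff, e.apply_symm_apply], e.apply_symm_apply w⟩
  · rintro ⟨u, hu, rfl⟩
    exact e.map_adj_iff.2 hu

lemma isEulerian_of_iso {V W : Type*} {P : SimpleGraph V} {Q : SimpleGraph W} (e : P ≃g Q)
    (h : IsEulerian Q) : IsEulerian P := by
  obtain ⟨h1, h2⟩ := h
  constructor
  · intro v
    have := h1 (e v)
    rwa [neighborSet_map e v, Set.ncard_image_of_injective _ e.injective] at this
  · intro u v x y huv hxy
    have := h2 (e u) (e v) (e x) (e y) (e.map_adj_iff.2 huv) (e.map_adj_iff.2 hxy)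
    have := this.map e.symm.toHom
    simpa using this

lemma isEulerian_iff_iso {V W : Type*} {P : SimpleGraph V} {Q : SimpleGraph W} (e : P ≃g Q) :
    IsEulerian P ↔ IsEulerian Q := ⟨isEulerian_of_iso e.symm, isEulerian_of_iso e⟩

-- The number of dominating sets of a finite graph is odd (Brouwer–Csorba–Schrijver)
variable {α β : Type*} [Fintype α] [Fintype β] (G : SimpleGraph α) (H : SimpleGraph β)

lemma odd_card_domFinsets_s4 [DecidableEq α] [DecidableRel G.Adj] :
    Odd (univ.filter (fun D : Finset α => ∀ v, ∃ u ∈ D, u = v ∨ G.Adj u v)).card := by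
  classical
  set opp : Finset α → Finset α :=
    fun A => univ.filter (fun b => ∀ a ∈ A, ¬(a = b ∨ G.Adj a b)) with hopp
  set R : Finset α × Finset α → Prop :=
    fun p => ∀ a ∈ p.1, ∀ b ∈ p.2, ¬(a = b ∨ G.Adj a b) with hR
  have hRswap : ∀ p, R p → R p.swap := by
    rintro ⟨A, B⟩ h a ha b hb
    intro hab
    refine h b hb a ha ?_
    rcases hab with h1 | h1
    · exact Or.inl h1.symm
    · exact Or.inr h1.symm
  set S : Finset (Finset α × Finset α) := univ.filter R with hS
  -- (∅, ∅) ∈ S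
  have hmem : ((∅, ∅) : Finset α × Finset α) ∈ S := by
    simp [hS, hR]
  -- parity of S via involution
  have hswap_ne : ∀ p ∈ S.erase (∅, ∅), p.swap ≠ p := by
    rintro ⟨A, B⟩ hp h
    have hAB : A = B := congrArg Prod.snd h
    have hpS := Finset.mem_of_mem_erase hp
    have hRp : R (A, B) := (Finset.mem_filter.1 hpS).2
    have hA : A = ∅ := by
      by_contra hne
      obtain ⟨a, ha⟩ := Finset.nonempty_iff_ne_empty.2 hne
      exact hRp a ha a (hAB ▸ ha) (Or.inl rfl)
    have hne := Finset.ne_of_mem_erase hp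
    exact hne (by rw [Prod.ext_iff]; exact ⟨hA, hAB ▸ hA⟩)
  have hswap_mem : ∀ p ∈ S.erase (∅, ∅), p.swap ∈ S.erase (∅, ∅) := by
    intro p hp
    have hpS := Finset.mem_of_mem_erase hp
    have : p.swap ∈ S := by
      rw [hS, Finset.mem_filter]
      exact ⟨Finset.mem_univ _, hRswap p (Finset.mem_filter.1 hpS).2⟩
    refine Finset.mem_erase.2 ⟨?_, this⟩
    intro h
    apply Finset.ne_of_mem_erase hp
    have := congrArg Prod.swap h
    simpa using this
  have herase_even : ((S.erase (∅, ∅)).card : ZMod 2) = 0 := by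
    have h0 : (∑ _p ∈ S.erase (∅, ∅), (1 : ZMod 2)) = 0 :=
      Finset.sum_involution (fun p _ => p.swap)
        (fun a ha => by decide)
        (fun a ha _ => hswap_ne a ha) hswap_mem (fun a ha => by simp)
    simpa using h0
  have hScard : (S.card : ZMod 2) = 1 := by
    rw [← Finset.insert_erase hmem, Finset.card_insert_of_notMem (Finset.notMem_erase _ _)]
    push_cast
    rw [herase_even]
    ring
  -- fiberwise count
  have key : ∀ A B : Finset α, R (A, B) ↔ B ⊆ opp A := by
    intro A B
    constructor
    · intro h b hb
      rw [hopp]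
      simp only [Finset.mem_filter, Finset.mem_univ, true_and]
      exact fun a ha => h a ha b hb
    · intro h a ha b hb
      have := h hb
      rw [hopp] at this
      simp only [Finset.mem_filter, Finset.mem_univ, true_and] at this
      exact this a ha
  have hfib : S.card = ∑ A : Finset α, 2 ^ (opp A).card := by
    rw [Finset.card_eq_sum_card_fiberwise (f := Prod.fst) (t := univ) (fun p _ => mem_univ _)]
    refine Finset.sum_congr rfl ?_
    intro A _
    rw [← Finset.card_powerset]
    refine Finset.card_nbij' Prod.snd (fun B => (A, B)) ?_ ?_ ?_ ?_
    · intro p hp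
      obtain ⟨hpS, h1⟩ := Finset.mem_filter.1 hp
      have hRp : R p := (Finset.mem_filter.1 hpS).2
      have : R (p.1, p.2) := hRp
      rw [h1] at this
      exact Finset.mem_powerset.2 ((key _ _).1 this)
    · intro B hB
      exact Finset.mem_filter.2 ⟨Finset.mem_filter.2
        ⟨Finset.mem_univ _, (key A B).2 (Finset.mem_powerset.1 hB)⟩, rfl⟩
    · rintro ⟨A', B⟩ hp
      have h1 : A' = A := (Finset.mem_filter.1 hp).2
      rw [h1]
    · intro B _
      rfl
  -- conclude mod 2
  have hfilter : ((univ.filter (fun A : Finset α => opp A = ∅)).card : ZMod 2) = 1 := by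
    rw [← hScard, hfib]
    push_cast
    have hterm : ∀ A ∈ (univ : Finset (Finset α)),
        (2 : ZMod 2) ^ (opp A).card = if opp A = ∅ then 1 else 0 := by
      intro A _
      have h2 : (2 : ZMod 2) = 0 := by decide
      rw [h2]
      by_cases h : opp A = ∅
      · simp [h]
      · rw [zero_pow (by simpa [Finset.card_eq_zero] using h), if_neg h]
    rw [Finset.sum_congr rfl hterm, Finset.sum_boole]
  have hsame : (univ.filter (fun A : Finset α => opp A = ∅)) =
      (univ.filter (fun D : Finset α => ∀ v, ∃ u ∈ D, u = v ∨ G.Adj u v)) := by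
    refine Finset.filter_congr ?_
    intro A _
    rw [hopp, Finset.filter_eq_empty_iff]
    constructor
    · intro h v
      have := h (Finset.mem_univ v)
      push_neg at this
      obtain ⟨u, hu, h'⟩ := this
      exact ⟨u, hu, h'⟩
    · intro h b _
      push_neg
      obtain ⟨u, hu, h'⟩ := h b
      exact ⟨u, hu, h'⟩
  rw [hsame] at hfilter
  rw [Nat.odd_iff]
  rcases Nat.mod_two_eq_zero_or_one
    (univ.filter (fun D : Finset α => ∀ v, ∃ u ∈ D, u = v ∨ G.Adj u v)).card with h | h
  · exfalso
    have : ((univ.filter (fun D : Finset α => ∀ v, ∃ u ∈ D, u = v ∨ G.Adj u v)).card : ZMod 2)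
        = 0 := (ZMod.natCast_eq_zero_iff _ _).2 (Nat.dvd_of_mod_eq_zero h)
    rw [hfilter] at this
    exact one_ne_zero this
  · exact h


lemma odd_nat_card_domSets : Odd (Nat.card {D : Set α // IsDomSet G D}) := by
  classical
  have e : {D : Finset α // ∀ v, ∃ u ∈ D, u = v ∨ G.Adj u v} ≃ {D : Set α // IsDomSet G D} :=
    (Fintype.finsetEquivSet).subtypeEquiv (by
      intro D
      show (∀ v, ∃ u ∈ D, u = v ∨ G.Adj u v) ↔ IsDomSet G (Fintype.finsetEquivSet D)
      have hmem : ∀ x, x ∈ Fintype.finsetEquivSet D ↔ x ∈ D := by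
        intro x
        rfl
      constructor
      · intro h v hv
        obtain ⟨u, hu, h'⟩ := h v
        rcases h' with rfl | h'
        · exact absurd ((hmem u).2 hu) hv
        · exact ⟨u, (hmem u).2 hu, h'⟩
      · intro h v
        by_cases hv : v ∈ Fintype.finsetEquivSet D
        · exact ⟨v, (hmem v).1 hv, Or.inl rfl⟩
        · obtain ⟨u, hu, h'⟩ := h v hv
          exact ⟨u, (hmem u).1 hu, Or.inr h'⟩)
  rw [← Nat.card_congr e, Nat.card_eq_fintype_card, Fintype.card_subtype]
  exact odd_card_domFinsets_s4 G

-- Basic dominating set facts and preconnectedness of the dominating graph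
lemma isDomSet_univ : IsDomSet G Set.univ := fun v hv => absurd (Set.mem_univ v) hv

lemma isDomSet_of_superset {D E : Set α} (hD : IsDomSet G D) (hDE : D ⊆ E) : IsDomSet G E := by
  intro v hv
  obtain ⟨u, hu, hadj⟩ := hD v (fun h => hv (hDE h))
  exact ⟨u, hDE hu, hadj⟩

lemma domGraph_preconnected : (DomGraph G).Preconnected := by
  classical
  have huniv : IsDomSet G Set.univ := isDomSet_univ G
  suffices h : ∀ (n : ℕ) (D : {D : Set α // IsDomSet G D}), (Set.univ \ D.1).ncard = n →
      (DomGraph G).Reachable D ⟨Set.univ, huniv⟩ by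
    intro D E
    exact (h _ D rfl).trans (h _ E rfl).symm
  intro n
  induction n using Nat.strong_induction_on with
  | _ n ih =>
    intro D hn
    by_cases hD : D.1 = Set.univ
    · rw [show D = (⟨Set.univ, huniv⟩ : {D : Set α // IsDomSet G D}) from Subtype.ext hD]
    · obtain ⟨v, hv⟩ := (Set.ne_univ_iff_exists_notMem D.1).1 hD
      have hvd : v ∈ Set.univ \ D.1 := ⟨Set.mem_univ v, hv⟩
      set D' : Set α := insert v D.1 with hD'
      have hdom : IsDomSet G D' := isDomSet_of_superset G D.2 (Set.subset_insert v D.1)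
      have hadj : (DomGraph G).Adj D ⟨D', hdom⟩ := by
        show (symmDiff D.1 D').ncard = 1
        have : symmDiff D.1 D' = {v} := by
          rw [hD', symmDiff_def]
          ext x
          simp only [Set.sup_eq_union, Set.mem_union, Set.mem_diff, Set.mem_insert_iff,
            Set.mem_singleton_iff]
          constructor
          · rintro (⟨hx, h2⟩ | ⟨h1 | h1, h2⟩) <;> tauto
          · rintro rfl
            exact Or.inr ⟨Or.inl rfl, hv⟩
        rw [this, Set.ncard_singleton]
      have hcard : (Set.univ \ D').ncard < n := by
        rw [← hn]
        apply Set.ncard_lt_ncard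
        · constructor
          · intro x hx
            exact ⟨hx.1, fun h => hx.2 (Set.mem_insert_of_mem v h)⟩
          · intro hsub
            exact (hsub hvd).2 (Set.mem_insert v D.1)
        · exact Set.toFinite _
      exact (hadj.reachable).trans (ih _ hcard ⟨D', hdom⟩ rfl)

-- Splitting over a sum type
lemma sum_set_decomp (S : Set (α ⊕ β)) :
    S = Sum.inl '' (Sum.inl ⁻¹' S) ∪ Sum.inr '' (Sum.inr ⁻¹' S) := by
  ext x
  cases x <;> simp

lemma ncard_sum_split (S : Set (α ⊕ β)) :
    S.ncard = (Sum.inl ⁻¹' S).ncard + (Sum.inr ⁻¹' S).ncard := by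
  conv_lhs => rw [sum_set_decomp S]
  rw [Set.ncard_union_eq ?_ (Set.toFinite _) (Set.toFinite _),
    Set.ncard_image_of_injective _ Sum.inl_injective,
    Set.ncard_image_of_injective _ Sum.inr_injective]
  rw [Set.disjoint_left]
  rintro a ⟨x, -, rfl⟩ ⟨y, -, h⟩
  exact Sum.inl_ne_inr h.symm

lemma preimage_symmDiff_inl (D D' : Set (α ⊕ β)) :
    Sum.inl ⁻¹' (symmDiff D D') = symmDiff (Sum.inl ⁻¹' D) (Sum.inl ⁻¹' D') := by
  ext a; simp [Set.mem_symmDiff]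

lemma preimage_symmDiff_inr (D D' : Set (α ⊕ β)) :
    Sum.inr ⁻¹' (symmDiff D D') = symmDiff (Sum.inr ⁻¹' D) (Sum.inr ⁻¹' D') := by
  ext a; simp [Set.mem_symmDiff]

variable (G : SimpleGraph α) (H : SimpleGraph β)

lemma isDomSet_sum_iff (D : Set (α ⊕ β)) :
    IsDomSet (G ⊕g H) D ↔ IsDomSet G (Sum.inl ⁻¹' D) ∧ IsDomSet H (Sum.inr ⁻¹' D) := by
  constructor
  · intro hD
    constructor
    · intro a ha
      obtain ⟨u, hu, hadj⟩ := hD (Sum.inl a) ha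
      cases u with
      | inl u => exact ⟨u, hu, by simpa using hadj⟩
      | inr u => simp at hadj
    · intro b hb
      obtain ⟨u, hu, hadj⟩ := hD (Sum.inr b) hb
      cases u with
      | inl u => simp at hadj
      | inr u => exact ⟨u, hu, by simpa using hadj⟩
  · rintro ⟨hA, hB⟩ x hx
    cases x with
    | inl a =>
      obtain ⟨u, hu, hadj⟩ := hA a hx
      exact ⟨Sum.inl u, hu, by simpa using hadj⟩
    | inr b =>
      obtain ⟨u, hu, hadj⟩ := hB b hx
      exact ⟨Sum.inr u, hu, by simpa using hadj⟩

/-- The dominating graph of a disjoint union is isomorphic to the box product of the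
dominating graphs. -/
noncomputable def domGraphSumIso :
    DomGraph (G ⊕g H) ≃g (DomGraph G □ DomGraph H) where
  toFun D := (⟨Sum.inl ⁻¹' D.1, ((isDomSet_sum_iff G H D.1).1 D.2).1⟩,
              ⟨Sum.inr ⁻¹' D.1, ((isDomSet_sum_iff G H D.1).1 D.2).2⟩)
  invFun p := ⟨Sum.inl '' p.1.1 ∪ Sum.inr '' p.2.1, by
    rw [isDomSet_sum_iff]
    constructor
    · have : Sum.inl ⁻¹' (Sum.inl '' p.1.1 ∪ Sum.inr '' p.2.1) = p.1.1 := by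
        ext a; simp [Set.preimage_union]
      rw [this]; exact p.1.2
    · have : Sum.inr ⁻¹' (Sum.inl '' p.1.1 ∪ Sum.inr '' p.2.1) = p.2.1 := by
        ext a; simp [Set.preimage_union]
      rw [this]; exact p.2.2⟩
  left_inv D := by
    apply Subtype.ext
    exact (sum_set_decomp D.1).symm
  right_inv p := by
    ext x
    · show x ∈ Sum.inl ⁻¹' (Sum.inl '' p.1.1 ∪ Sum.inr '' p.2.1) ↔ x ∈ p.1.1
      simp
    · show x ∈ Sum.inr ⁻¹' (Sum.inl '' p.1.1 ∪ Sum.inr '' p.2.1) ↔ x ∈ p.2.1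
      simp
  map_rel_iff' := by
    intro D D'
    rw [show (DomGraph (G ⊕g H)).Adj D D' ↔ (symmDiff D.1 D'.1).ncard = 1 from Iff.rfl]
    rw [boxProd_adj]
    have hsplit : (symmDiff D.1 D'.1).ncard =
        (symmDiff (Sum.inl ⁻¹' D.1) (Sum.inl ⁻¹' D'.1)).ncard +
        (symmDiff (Sum.inr ⁻¹' D.1) (Sum.inr ⁻¹' D'.1)).ncard := by
      rw [ncard_sum_split (symmDiff D.1 D'.1), preimage_symmDiff_inl, preimage_symmDiff_inr]
    have hzeroA : (symmDiff (Sum.inl ⁻¹' D.1) (Sum.inl ⁻¹' D'.1)).ncard = 0 ↔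
        Sum.inl ⁻¹' D.1 = Sum.inl ⁻¹' D'.1 := by
      rw [Set.ncard_eq_zero (Set.toFinite _), ← Set.bot_eq_empty, symmDiff_eq_bot]
    have hzeroB : (symmDiff (Sum.inr ⁻¹' D.1) (Sum.inr ⁻¹' D'.1)).ncard = 0 ↔
        Sum.inr ⁻¹' D.1 = Sum.inr ⁻¹' D'.1 := by
      rw [Set.ncard_eq_zero (Set.toFinite _), ← Set.bot_eq_empty, symmDiff_eq_bot]
    constructor
    · rintro (⟨h1, h2⟩ | ⟨h1, h2⟩)
      · have e2 : Sum.inr ⁻¹' D.1 = Sum.inr ⁻¹' D'.1 := congrArg Subtype.val h2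
        have hB0 : (symmDiff (Sum.inr ⁻¹' D.1) (Sum.inr ⁻¹' D'.1)).ncard = 0 := hzeroB.2 e2
        have : (symmDiff (Sum.inl ⁻¹' D.1) (Sum.inl ⁻¹' D'.1)).ncard = 1 := h1
        rw [hsplit]
        omega
      · have e2 : Sum.inl ⁻¹' D.1 = Sum.inl ⁻¹' D'.1 := congrArg Subtype.val h2
        rw [hsplit]
        have h0 : (symmDiff (Sum.inl ⁻¹' D.1) (Sum.inl ⁻¹' D'.1)).ncard = 0 := hzeroA.2 e2
        have : (symmDiff (Sum.inr ⁻¹' D.1) (Sum.inr ⁻¹' D'.1)).ncard = 1 := h1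
        omega
    · intro h
      rw [hsplit] at h
      rcases Nat.add_eq_one_iff.1 h with ⟨h1, h2⟩ | ⟨h1, h2⟩
      · right
        exact ⟨h2, Subtype.ext (hzeroA.1 h1)⟩
      · left
        exact ⟨h1, Subtype.ext (hzeroB.1 h2)⟩

-- Degree bookkeeping and the Eulerian criterion for box products
lemma ncard_neighborSet_eq_degree {V : Type*} [Fintype V] (P : SimpleGraph V)
    [DecidableRel P.Adj] (v : V) : (P.neighborSet v).ncard = P.degree v := by
  rw [← card_neighborFinset_eq_degree]
  rw [Set.ncard_eq_toFinset_card']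
  rfl

lemma exists_even_degree {V : Type*} [Fintype V] (P : SimpleGraph V) [DecidableRel P.Adj]
    (hodd : Odd (Nat.card V)) : ∃ v, Even (P.degree v) := by
  rw [Nat.card_eq_fintype_card] at hodd
  by_contra h'
  push_neg at h'
  have hall : ∀ v : V, Odd (P.degree v) := fun v => Nat.not_even_iff_odd.1 (h' v)
  have heven := P.even_card_odd_degree_vertices
  have : (univ.filter fun v => Odd (P.degree v)) = univ := by
    apply Finset.filter_true_of_mem
    intro v _
    exact hall v
  rw [this, Finset.card_univ] at heven
  exact (Nat.not_even_iff_odd.2 hodd) heven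

lemma boxProd_isEulerian_iff {V W : Type*} [Fintype V] [Fintype W]
    {P : SimpleGraph V} {Q : SimpleGraph W}
    (hP : P.Preconnected) (hQ : Q.Preconnected)
    (hv : Odd (Nat.card V)) (hw : Odd (Nat.card W)) :
    IsEulerian (P □ Q) ↔ IsEulerian P ∧ IsEulerian Q := by
  classical
  have hdeg : ∀ x : V × W, ((P □ Q).neighborSet x).ncard = P.degree x.1 + Q.degree x.2 := by
    intro x
    rw [← ncard_neighborSet_eq_degree, ← ncard_neighborSet_eq_degree]
    rw [neighborSet_boxProd]
    rw [Set.ncard_union_eq ?_ (Set.toFinite _) (Set.toFinite _)]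
    · rw [Set.prod_singleton, Set.singleton_prod,
        Set.ncard_image_of_injective _ (fun u v h => by simpa using congrArg Prod.fst h),
        Set.ncard_image_of_injective _ (fun u v h => by simpa using congrArg Prod.snd h)]
    · rw [Set.disjoint_left]
      rintro ⟨a, b⟩ ⟨ha, hb⟩ ⟨ha', hb'⟩
      simp only [Set.mem_singleton_iff] at hb ha'
      subst hb ha'
      exact P.irrefl ha
  constructor
  · intro ⟨h1, _⟩
    have hsum : ∀ (a : V) (b : W), Even (P.degree a + Q.degree b) := by
      intro a b
      have := h1 (a, b)
      rwa [hdeg (a, b)] at this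
    obtain ⟨a₀, ha₀⟩ := exists_even_degree P hv
    obtain ⟨b₀, hb₀⟩ := exists_even_degree Q hw
    have hQeven : ∀ b, Even (Q.degree b) := by
      intro b
      have := hsum a₀ b
      rw [Nat.even_add] at this
      exact this.1 ha₀
    have hPeven : ∀ a, Even (P.degree a) := by
      intro a
      have := hsum a b₀
      rw [Nat.even_add] at this
      exact this.2 hb₀
    refine ⟨⟨fun v => ?_, fun u v x y _ _ => hP u x⟩, ⟨fun w => ?_, fun u v x y _ _ => hQ u x⟩⟩
    · rw [ncard_neighborSet_eq_degree]; exact hPeven v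
    · rw [ncard_neighborSet_eq_degree]; exact hQeven w
  · rintro ⟨⟨hPdeg, -⟩, ⟨hQdeg, -⟩⟩
    constructor
    · intro x
      rw [hdeg x]
      have h1 := hPdeg x.1
      have h2 := hQdeg x.2
      rw [ncard_neighborSet_eq_degree] at h1 h2
      exact h1.add h2
    · intro u v x y _ _
      exact (hP.boxProd hQ) u x

end Aux

/-- The dominating graph of a disjoint union is Eulerian iff the dominating graphs of
both parts are Eulerian. -/
theorem domGraph_sum_eulerian_iff {α β : Type*} [Fintype α] [Fintype β]
    (G : SimpleGraph α) (H : SimpleGraph β) :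
    IsEulerian (DomGraph (G ⊕g H)) ↔ IsEulerian (DomGraph G) ∧ IsEulerian (DomGraph H) := by
  classical
  letI : Fintype {D : Set α // IsDomSet G D} := Fintype.ofFinite _
  letI : Fintype {D : Set β // IsDomSet H D} := Fintype.ofFinite _
  rw [isEulerian_iff_iso (domGraphSumIso G H)]
  exact boxProd_isEulerian_iff (domGraph_preconnected G) (domGraph_preconnected H)
    (odd_nat_card_domSets G) (odd_nat_card_domSets H)
end

section
/- Let G be a connected finite simple graph on n ≥ 2 vertices and let ℓ ∈ {1, …, n−1} be such that (1) some set of ℓ vertices of G dominates G, (2) some set of ℓ vertices of G does not dominate G, and (3) every set of ℓ+1 vertices of G dominates G. Then the dominating graph D(G) has at least one vertex of even degree and at least one vertex of odd degree. -/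
open SimpleGraph

section Aux

variable {V : Type*} [Fintype V] (G : SimpleGraph V)

lemma isDomSet_mono {S T : Set V} (h : S ⊆ T) (hS : IsDomSet G S) : IsDomSet G T := by
  intro v hv
  obtain ⟨u, hu, hadj⟩ := hS v (fun hvS => hv (h hvS))
  exact ⟨u, h hu, hadj⟩

lemma symmDiff_singleton_of_mem {D : Set V} {v : V} (h : v ∈ D) :
    symmDiff D {v} = D \ {v} := by
  ext z
  simp only [Set.mem_symmDiff, Set.mem_singleton_iff, Set.mem_diff]
  constructor
  · rintro (⟨hz, hne⟩ | ⟨rfl, hz⟩)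
    · exact ⟨hz, hne⟩
    · exact absurd h hz
  · rintro ⟨hz, hne⟩
    exact Or.inl ⟨hz, hne⟩

lemma symmDiff_singleton_of_not_mem {D : Set V} {v : V} (h : v ∉ D) :
    symmDiff D {v} = insert v D := by
  ext z
  simp only [Set.mem_symmDiff, Set.mem_singleton_iff, Set.mem_insert_iff]
  constructor
  · rintro (⟨hz, _⟩ | ⟨rfl, _⟩)
    · exact Or.inr hz
    · exact Or.inl rfl
  · rintro (rfl | hz)
    · exact Or.inr ⟨rfl, h⟩
    · exact Or.inl ⟨hz, fun he => h (he ▸ hz)⟩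

/-- The degree of a vertex of the dominating graph counts the vertices `v` of `G` such
that the symmetric difference with `{v}` is still dominating. -/
lemma domGraph_deg (d : {D : Set V // IsDomSet G D}) :
    ((DomGraph G).neighborSet d).ncard
      = {v : V | IsDomSet G (symmDiff d.1 {v})}.ncard := by
  have hinj : Function.Injective (fun v : V => symmDiff d.1 {v}) := by
    intro a b h
    have h2 := congrArg (fun S => symmDiff d.1 S) h
    simp only [symmDiff_symmDiff_cancel_left] at h2
    exact Set.singleton_eq_singleton_iff.mp h2
  have key : Subtype.val '' ((DomGraph G).neighborSet d)
      = (fun v : V => symmDiff d.1 {v}) '' {v : V | IsDomSet G (symmDiff d.1 {v})} := by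
    ext B
    constructor
    · rintro ⟨⟨B, hB⟩, hadj, rfl⟩
      have h1 : (symmDiff d.1 B).ncard = 1 := ((DomGraph G).mem_neighborSet _ _).mp hadj
      obtain ⟨v, hv⟩ := Set.ncard_eq_one.mp h1
      have hBv : B = symmDiff d.1 {v} := by
        rw [← hv, symmDiff_symmDiff_cancel_left]
      exact ⟨v, by rw [Set.mem_setOf_eq, ← hBv]; exact hB, hBv.symm⟩
    · rintro ⟨v, hv, rfl⟩
      refine ⟨⟨symmDiff d.1 {v}, hv⟩, ?_, rfl⟩
      rw [SimpleGraph.mem_neighborSet]; show (symmDiff d.1 (symmDiff d.1 {v})).ncard = 1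
      rw [symmDiff_symmDiff_cancel_left]
      simp
  calc ((DomGraph G).neighborSet d).ncard
      = (Subtype.val '' ((DomGraph G).neighborSet d)).ncard :=
        (Set.ncard_image_of_injective _ Subtype.val_injective).symm
    _ = _ := by rw [key]; exact Set.ncard_image_of_injective _ hinj

lemma univ_isDomSet : IsDomSet G (Set.univ : Set V) :=
  fun v hv => absurd (Set.mem_univ v) hv

lemma exists_adj_of_connected (hconn : G.Connected) (hn : 2 ≤ Fintype.card V) (v : V) :
    ∃ u, G.Adj v u := by
  obtain ⟨u, hu⟩ := Fintype.exists_ne_of_one_lt_card (by omega) v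
  obtain ⟨p⟩ := hconn.preconnected v u
  cases p with
  | nil => exact absurd rfl hu
  | cons h _ => exact ⟨_, h⟩

/-- A non-dominating set of size `ℓ` is exactly the complement of the closed
neighbourhood of some vertex. -/
lemma nondom_struct {ℓ : ℕ} (h3 : ∀ S : Set V, S.ncard = ℓ + 1 → IsDomSet G S)
    {B : Set V} (hB : B.ncard = ℓ) (hnd : ¬ IsDomSet G B) :
    ∃ u : V, ∀ z : V, z ∈ B ↔ ¬ (z = u ∨ G.Adj u z) := by
  rw [IsDomSet] at hnd
  push_neg at hnd
  obtain ⟨u, huB, hu⟩ := hnd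
  refine ⟨u, ?_⟩
  have hsub : B ⊆ {z | z ≠ u ∧ ¬ G.Adj u z} := by
    intro z hz
    refine ⟨fun h => huB (h ▸ hz), fun hadj => hu z hz hadj.symm⟩
  have hle : {z | z ≠ u ∧ ¬ G.Adj u z}.ncard ≤ ℓ := by
    by_contra hlt
    push_neg at hlt
    obtain ⟨T, hTsub, hT⟩ := Set.exists_subset_card_eq (n := ℓ + 1) hlt
    have hTdom := h3 T hT
    have huT : u ∉ T := fun huT => (hTsub huT).1 rfl
    obtain ⟨c, hcT, hcadj⟩ := hTdom u huT
    exact (hTsub hcT).2 hcadj.symm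
  have heq := Set.eq_of_subset_of_ncard_le hsub (by rw [hB]; exact hle)
  intro z
  rw [heq]
  simp only [Set.mem_setOf_eq]
  tauto

lemma key_lemma {ℓ : ℕ}
    (hcase : ∀ D : Set V, D.ncard = ℓ + 1 → Even {v ∈ D | ¬ IsDomSet G (D \ {v})}.ncard)
    (h3 : ∀ S : Set V, S.ncard = ℓ + 1 → IsDomSet G S)
    {B : Set V} (hB : B.ncard = ℓ) (hnd : ¬ IsDomSet G B)
    {x : V} (hx : x ∉ B) :
    ∃ v ∈ B, ∃ u : V, ∀ z : V, ((z ∈ B ∨ z = x) ∧ z ≠ v) ↔ ¬ (z = u ∨ G.Adj u z) := by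
  have hD : (insert x B).ncard = ℓ + 1 := by
    rw [Set.ncard_insert_of_notMem hx, hB]
  have hxT : x ∈ {v ∈ insert x B | ¬ IsDomSet G (insert x B \ {v})} := by
    refine ⟨Set.mem_insert _ _, ?_⟩
    rw [Set.insert_diff_self_of_notMem hx]
    exact hnd
  have heven := hcase (insert x B) hD
  have hsecond : ∃ v ∈ {v ∈ insert x B | ¬ IsDomSet G (insert x B \ {v})}, v ≠ x := by
    by_contra hcon
    push_neg at hcon
    have hsing : {v ∈ insert x B | ¬ IsDomSet G (insert x B \ {v})} = {x} :=
      Set.eq_singleton_iff_unique_mem.mpr ⟨hxT, fun v hv => hcon v hv⟩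
    rw [hsing, Set.ncard_singleton] at heven
    norm_num at heven
  obtain ⟨v, ⟨hvD, hvnd⟩, hvx⟩ := hsecond
  have hvB : v ∈ B := (Set.mem_insert_iff.mp hvD).resolve_left hvx
  have hcard : (insert x B \ {v}).ncard = ℓ := by
    rw [Set.ncard_diff_singleton_of_mem hvD, hD]
    omega
  obtain ⟨u, hu⟩ := nondom_struct G h3 hcard hvnd
  refine ⟨v, hvB, u, fun z => ?_⟩
  rw [← hu z]
  simp only [Set.mem_diff, Set.mem_insert_iff, Set.mem_singleton_iff]
  tauto

lemma structure_false {ℓ : ℕ} (hconn : G.Connected)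
    (h1 : ∃ S : Set V, S.ncard = ℓ ∧ IsDomSet G S)
    (h2 : ∃ S : Set V, S.ncard = ℓ ∧ ¬ IsDomSet G S)
    (h3 : ∀ S : Set V, S.ncard = ℓ + 1 → IsDomSet G S)
    (hcase : ∀ D : Set V, D.ncard = ℓ + 1 → Even {v ∈ D | ¬ IsDomSet G (D \ {v})}.ncard) :
    False := by
  classical
  obtain ⟨B, hB, hBnd⟩ := h2
  obtain ⟨w, hBiff⟩ := nondom_struct G h3 hB hBnd
  have hwB : w ∉ B := fun h => (hBiff w).mp h (Or.inl rfl)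
  -- Step 1: produce an open twin `b` of `w`.
  obtain ⟨b, hbB, u₀, iff₀⟩ := key_lemma G hcase h3 hB hBnd hwB
  have hbw : b ≠ w := fun h => hwB (h ▸ hbB)
  have hnadj : ¬ G.Adj w b := fun h => (hBiff b).mp hbB (Or.inr h)
  have hwu : w ≠ u₀ ∧ ¬ G.Adj u₀ w := by
    have h := (iff₀ w).mp ⟨Or.inr rfl, Ne.symm hbw⟩
    push_neg at h
    exact h
  have hu₀ : u₀ = b := by
    by_contra hne
    have hRHSfalse : ¬ ¬ (u₀ = u₀ ∨ G.Adj u₀ u₀) := fun h => h (Or.inl rfl)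
    have hLHSfalse : ¬ ((u₀ ∈ B ∨ u₀ = w) ∧ u₀ ≠ b) := fun h => hRHSfalse ((iff₀ u₀).mp h)
    have h5 : ¬ (u₀ ∈ B ∨ u₀ = w) := fun h => hLHSfalse ⟨h, hne⟩
    push_neg at h5
    have hor : u₀ = w ∨ G.Adj w u₀ := by
      by_contra hc
      exact h5.1 ((hBiff u₀).mpr hc)
    rcases hor with h | h
    · exact h5.2 h
    · exact hwu.2 h.symm
  rw [hu₀] at iff₀ hwu
  clear hu₀
  have htwin : ∀ z, G.Adj b z ↔ G.Adj w z := by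
    intro z
    by_cases hz1 : z = b
    · rw [hz1]
      exact ⟨fun h => absurd h (G.loopless.irrefl b), fun h => absurd h hnadj⟩
    · by_cases hz2 : z = w
      · rw [hz2]
        exact ⟨fun h => absurd h hwu.2, fun h => absurd h (G.loopless.irrefl w)⟩
      · constructor
        · intro hadj
          by_contra hnw
          have hzB : z ∈ B := (hBiff z).mpr (by
            rintro (h | h)
            · exact hz2 h
            · exact hnw h)
          exact ((iff₀ z).mp ⟨Or.inl hzB, hz1⟩) (Or.inr hadj)
        · intro hadj
          have hzB : z ∉ B := fun hh => ((hBiff z).mp hh) (Or.inr hadj)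
          have hor : z = b ∨ G.Adj b z := by
            by_contra hc
            have hL := (iff₀ z).mpr hc
            rcases hL.1 with h | h
            · exact hzB h
            · exact hz2 h
          rcases hor with h | h
          · exact absurd h hz1
          · exact h
  -- Step 2: each neighbour `x` of `w` determines a special neighbour `u` of `w`.
  have step2 : ∀ x : V, G.Adj w x → ∃ u : V, G.Adj w u ∧ (x ≠ u ∧ ¬ G.Adj u x) ∧
      (∀ z, G.Adj w z → z ≠ x → z ≠ u → G.Adj u z) ∧
      (∀ s, G.Adj u s → (s = b ∨ s = w ∨ G.Adj w s)) := by
    intro x hwx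
    have hxB : x ∉ B := fun h => (hBiff x).mp h (Or.inr hwx)
    obtain ⟨y, hyB, u, iff₁⟩ := key_lemma G hcase h3 hB hBnd hxB
    have hxw : x ≠ w := fun h => G.loopless.irrefl w (h ▸ hwx)
    have hyx : x ≠ y := fun h => hxB (by rw [h]; exact hyB)
    have hwu' : w = u ∨ G.Adj u w := by
      by_contra hc
      have hL := (iff₁ w).mpr hc
      rcases hL.1 with h | h
      · exact hwB h
      · exact hxw h.symm
    have hne_wu : w ≠ u := by
      rintro rfl
      have := (iff₁ x).mp ⟨Or.inr rfl, hyx⟩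
      exact this (Or.inr hwx)
    have hadjwu : G.Adj w u := by
      rcases hwu' with h | h
      · exact absurd h hne_wu
      · exact h.symm
    have hyb : y = b := by
      by_contra hyb
      have := (iff₁ b).mp ⟨Or.inl hbB, fun h => hyb h.symm⟩
      exact this (Or.inr ((htwin u).mpr hadjwu).symm)
    rw [hyb] at iff₁ hyB
    clear hyb
    have hc1 : ¬ (x = u ∨ G.Adj u x) :=
      (iff₁ x).mp ⟨Or.inr rfl, fun h => hxB (by rw [h]; exact hyB)⟩
    refine ⟨u, hadjwu, ⟨fun h => hc1 (Or.inl h), fun h => hc1 (Or.inr h)⟩, ?_, ?_⟩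
    · intro z hz hzx hzu
      have hzB : z ∉ B := fun hh => (hBiff z).mp hh (Or.inr hz)
      by_contra hcadj
      have hL := (iff₁ z).mpr (by
        rintro (h | h)
        · exact hzu h
        · exact hcadj h)
      rcases hL.1 with h | h
      · exact hzB h
      · exact hzx h
    · intro s hus
      by_cases hsb : s = b
      · exact Or.inl hsb
      · by_cases hsB : s ∈ B
        · exact absurd (Or.inr hus) ((iff₁ s).mp ⟨Or.inl hsB, hsb⟩)
        · refine Or.inr ?_
          by_contra hc
          push_neg at hc
          exact hsB ((hBiff s).mpr (by
            rintro (h | h)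
            · exact hc.1 h
            · exact hc.2 h))
  -- Step 3: the induced map on neighbours of `w` is injective, hence surjective.
  let f : {z : V // G.Adj w z} → {z : V // G.Adj w z} :=
    fun x => ⟨(step2 x.1 x.2).choose, (step2 x.1 x.2).choose_spec.1⟩
  have hf : ∀ x : {z : V // G.Adj w z},
      (x.1 ≠ (f x).1 ∧ ¬ G.Adj (f x).1 x.1) ∧
      (∀ z, G.Adj w z → z ≠ x.1 → z ≠ (f x).1 → G.Adj (f x).1 z) ∧
      (∀ s, G.Adj (f x).1 s → (s = b ∨ s = w ∨ G.Adj w s)) :=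
    fun x => ⟨(step2 x.1 x.2).choose_spec.2.1, (step2 x.1 x.2).choose_spec.2.2.1,
      (step2 x.1 x.2).choose_spec.2.2.2⟩
  have hinj : Function.Injective f := by
    intro x x' hxx
    by_contra hne
    have hne1 : x.1 ≠ x'.1 := fun h => hne (Subtype.ext h)
    have hx'ne : x'.1 ≠ (f x).1 := by rw [hxx]; exact (hf x').1.1
    have hAdj : G.Adj (f x).1 x'.1 := (hf x).2.1 x'.1 x'.2 (Ne.symm hne1) hx'ne
    have hnAdj : ¬ G.Adj (f x').1 x'.1 := (hf x').1.2
    rw [← hxx] at hnAdj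
    exact hnAdj hAdj
  have hsurj : Function.Surjective f := Finite.injective_iff_surjective.mp hinj
  -- Step 4: the set {w, b} ∪ N(w) is closed under adjacency.
  have hstep : ∀ a c : V, (a = w ∨ a = b ∨ G.Adj w a) → G.Adj a c →
      (c = w ∨ c = b ∨ G.Adj w c) := by
    intro a c ha hac
    rcases ha with rfl | rfl | ha
    · exact Or.inr (Or.inr hac)
    · exact Or.inr (Or.inr ((htwin c).mp hac))
    · obtain ⟨x, hx⟩ := hsurj ⟨a, ha⟩
      have hclose := (hf x).2.2
      rw [hx] at hclose
      have := hclose c hac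
      tauto
  -- Step 5: by connectivity every vertex lies in that set.
  have hall : ∀ p : V, (p = w ∨ p = b ∨ G.Adj w p) := by
    intro p
    obtain ⟨q⟩ := hconn.preconnected w p
    have hwalk : ∀ (a c : V) (q : G.Walk a c),
        (a = w ∨ a = b ∨ G.Adj w a) → (c = w ∨ c = b ∨ G.Adj w c) := by
      intro a c q
      induction q with
      | nil => exact id
      | cons h q ih => intro ha; exact ih (hstep _ _ ha h)
    exact hwalk w p q (Or.inl rfl)
  -- Step 6: hence B = {b} and ℓ = 1.
  have hBsing : B = {b} := by
    apply Set.eq_singleton_iff_unique_mem.mpr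
    refine ⟨hbB, fun z hz => ?_⟩
    rcases hall z with rfl | rfl | h
    · exact absurd hz hwB
    · rfl
    · exact absurd (Or.inr h) ((hBiff z).mp hz)
  have hl1 : ℓ = 1 := by rw [← hB, hBsing, Set.ncard_singleton]
  -- Step 7: contradiction with the existence of a dominating set of size ℓ = 1.
  obtain ⟨S, hS1, hSdom⟩ := h1
  rw [hl1] at hS1
  obtain ⟨s, rfl⟩ := Set.ncard_eq_one.mp hS1
  rcases hall s with rfl | rfl | h
  · obtain ⟨c, hc, hcadj⟩ := hSdom b (by simpa using hbw)
    rw [Set.mem_singleton_iff] at hc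
    subst hc
    exact hnadj hcadj
  · obtain ⟨c, hc, hcadj⟩ := hSdom w (by simpa using (Ne.symm hbw))
    rw [Set.mem_singleton_iff] at hc
    subst hc
    exact G.loopless.irrefl w ((htwin w).mp hcadj)
  · obtain ⟨x, hx⟩ := hsurj ⟨s, h⟩
    have hprop := (hf x).1
    rw [hx] at hprop
    obtain ⟨c, hc, hcadj⟩ := hSdom x.1 (by simpa using hprop.1)
    rw [Set.mem_singleton_iff] at hc
    subst hc
    exact hprop.2 hcadj

end Aux

/-- If some set of `ℓ` vertices dominates `G`, some set of `ℓ` vertices does not dominate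
`G`, and every set of `ℓ + 1` vertices dominates `G`, then the dominating graph of the
connected graph `G` has a vertex of even degree and a vertex of odd degree. -/
theorem domGraph_even_and_odd_degree {V : Type*} [Fintype V] (G : SimpleGraph V)
    (hconn : G.Connected) (hn : 2 ≤ Fintype.card V)
    (ℓ : ℕ) (hℓ1 : 1 ≤ ℓ) (hℓ2 : ℓ ≤ Fintype.card V - 1)
    (h1 : ∃ S : Set V, S.ncard = ℓ ∧ IsDomSet G S)
    (h2 : ∃ S : Set V, S.ncard = ℓ ∧ ¬ IsDomSet G S)
    (h3 : ∀ S : Set V, S.ncard = ℓ + 1 → IsDomSet G S) :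
    (∃ d : {D : Set V // IsDomSet G D}, Even ((DomGraph G).neighborSet d).ncard) ∧
    (∃ d : {D : Set V // IsDomSet G D}, Odd ((DomGraph G).neighborSet d).ncard) := by
  classical
  have hadj : ∀ v : V, ∃ u, G.Adj v u := exists_adj_of_connected G hconn hn
  have hunivdom : IsDomSet G (Set.univ : Set V) := univ_isDomSet G
  have hdeg_univ : ((DomGraph G).neighborSet ⟨Set.univ, hunivdom⟩).ncard
      = Fintype.card V := by
    rw [domGraph_deg]
    have huniv : {v : V | IsDomSet G (symmDiff (Set.univ : Set V) {v})} = Set.univ := by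
      ext v
      simp only [Set.mem_setOf_eq, Set.mem_univ, iff_true]
      rw [symmDiff_singleton_of_mem (Set.mem_univ v)]
      intro z hz
      have hzv : z = v := by
        by_contra h
        exact hz ⟨trivial, by simpa using h⟩
      subst hzv
      obtain ⟨u, hu⟩ := hadj z
      exact ⟨u, ⟨trivial, by simpa using hu.ne'⟩, hu.symm⟩
    rw [huniv, Set.ncard_univ, Nat.card_eq_fintype_card]
  by_cases hcase : ∃ D : Set V, D.ncard = ℓ + 1 ∧
      Odd {v ∈ D | ¬ IsDomSet G (D \ {v})}.ncard
  · obtain ⟨D, hD, hodd⟩ := hcase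
    have hDdom := h3 D hD
    have hcompl : {v : V | IsDomSet G (symmDiff D {v})}
        = {v ∈ D | ¬ IsDomSet G (D \ {v})}ᶜ := by
      ext v
      simp only [Set.mem_setOf_eq, Set.mem_compl_iff, Set.mem_sep_iff, not_and, not_not]
      by_cases hv : v ∈ D
      · rw [symmDiff_singleton_of_mem hv]
        exact ⟨fun h _ => h, fun h => h hv⟩
      · rw [symmDiff_singleton_of_not_mem hv]
        exact ⟨fun _ h => absurd h hv,
          fun _ => isDomSet_mono G (Set.subset_insert v D) hDdom⟩
    have hdegD : ((DomGraph G).neighborSet ⟨D, hDdom⟩).ncard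
        = {v ∈ D | ¬ IsDomSet G (D \ {v})}ᶜ.ncard := by
      rw [domGraph_deg, hcompl]
    have hsum := Set.ncard_add_ncard_compl {v ∈ D | ¬ IsDomSet G (D \ {v})}
    rw [Nat.card_eq_fintype_card] at hsum
    rcases Nat.even_or_odd (Fintype.card V) with hev | hod
    · refine ⟨⟨⟨Set.univ, hunivdom⟩, by rw [hdeg_univ]; exact hev⟩, ⟨⟨D, hDdom⟩, ?_⟩⟩
      rw [hdegD]
      rcases Nat.even_or_odd ({v ∈ D | ¬ IsDomSet G (D \ {v})}ᶜ.ncard) with h | h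
      · exfalso
        have hod2 := hodd.add_even h
        rw [hsum] at hod2
        exact (Nat.not_odd_iff_even.mpr hev) hod2
      · exact h
    · refine ⟨⟨⟨D, hDdom⟩, ?_⟩, ⟨⟨Set.univ, hunivdom⟩, by rw [hdeg_univ]; exact hod⟩⟩
      rw [hdegD]
      rcases Nat.even_or_odd ({v ∈ D | ¬ IsDomSet G (D \ {v})}ᶜ.ncard) with h | h
      · exact h
      · exfalso
        have hev2 := hodd.add_odd h
        rw [hsum] at hev2
        exact (Nat.not_even_iff_odd.mpr hod) hev2
  · push_neg at hcase
    exact absurd (structure_false G hconn h1 h2 h3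
      (fun D hD => Nat.not_odd_iff_even.mp (hcase D hD))) id
end

section
/- Let G be a connected finite simple graph on n ≥ 2 vertices. The dominating graph D(G) is Eulerian if and only if n is even, n ≥ 4, and G is the cocktail party graph on n vertices (the complete graph K_n with a perfect matching removed). -/
open SimpleGraph

/-- `G` is a cocktail party graph: the complete graph with a perfect matching removed,
i.e. there is a fixed-point-free involutive pairing `f` of the vertices such that two
distinct vertices are adjacent iff they are not paired. -/
def IsCocktailParty {V : Type*} (G : SimpleGraph V) : Prop :=
  ∃ f : V → V, Function.Involutive f ∧ (∀ v, f v ≠ v) ∧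
    ∀ u v, G.Adj u v ↔ u ≠ v ∧ f u ≠ v

namespace DomAux

variable {V : Type*} [Fintype V] {G : SimpleGraph V}

/-- the set of non-neighbours of `v` (other than `v` itself). -/
def nonNbr (G : SimpleGraph V) (v : V) : Set V := {w | w ≠ v ∧ ¬ G.Adj v w}

lemma mem_nonNbr {v w : V} : w ∈ nonNbr G v ↔ w ≠ v ∧ ¬ G.Adj v w := Iff.rfl

lemma nonNbr_symm {v w : V} (h : w ∈ nonNbr G v) : v ∈ nonNbr G w :=
  ⟨fun e => h.1 e.symm, fun a => h.2 a.symm⟩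

lemma not_mem_nonNbr_self (v : V) : v ∉ nonNbr G v := fun h => h.1 rfl

/-- the set of vertices whose toggle keeps `D` dominating -/
def NbrV (G : SimpleGraph V) (D : Set V) : Set V := {v | v ∈ D → IsDomSet G (D \ {v})}

lemma symmDiff_singleton_of_mem {D : Set V} {v : V} (h : v ∈ D) :
    symmDiff D {v} = D \ {v} := by
  ext w
  rw [Set.mem_symmDiff]
  by_cases hw : w = v <;> simp [hw, h] <;> tauto

lemma symmDiff_singleton_of_not_mem {D : Set V} {v : V} (h : v ∉ D) :
    symmDiff D {v} = insert v D := by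
  ext w
  rw [Set.mem_symmDiff]
  by_cases hw : w = v <;> simp [hw, h] <;> tauto

lemma isDomSet_superset {D E : Set V} (hDE : D ⊆ E) (hD : IsDomSet G D) : IsDomSet G E := by
  intro v hv
  obtain ⟨u, hu, hadj⟩ := hD v (fun hvD => hv (hDE hvD))
  exact ⟨u, hDE hu, hadj⟩

lemma isDomSet_univ : IsDomSet G Set.univ := fun v hv => absurd (Set.mem_univ v) hv

lemma isDomSet_symmDiff_singleton {D : Set V} (hD : IsDomSet G D) {v : V}
    (hv : v ∈ NbrV G D) : IsDomSet G (symmDiff D {v}) := by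
  by_cases h : v ∈ D
  · rw [symmDiff_singleton_of_mem h]; exact hv h
  · rw [symmDiff_singleton_of_not_mem h]
    exact isDomSet_superset (Set.subset_insert v D) hD

/-- The key cardinality transfer : the degree of `D` in the dominating graph equals
the number of vertices whose toggle keeps `D` dominating. -/
lemma ncard_neighborSet (D : Set V) (hD : IsDomSet G D) :
    ((DomGraph G).neighborSet ⟨D, hD⟩).ncard = (NbrV G D).ncard := by
  classical
  have h1 : ((DomGraph G).neighborSet ⟨D, hD⟩).ncard
      = (Subtype.val '' ((DomGraph G).neighborSet ⟨D, hD⟩)).ncard :=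
    (Set.ncard_image_of_injective _ Subtype.val_injective).symm
  rw [h1]
  have h2 : Subtype.val '' ((DomGraph G).neighborSet ⟨D, hD⟩)
      = (fun v => symmDiff D {v}) '' (NbrV G D) := by
    ext B
    constructor
    · rintro ⟨⟨B', hB'⟩, hBmem, rfl⟩
      have hadj : (symmDiff D B').ncard = 1 := hBmem
      obtain ⟨v, hv⟩ := Set.ncard_eq_one.mp hadj
      have hBv : B' = symmDiff D {v} := by
        rw [← hv, symmDiff_symmDiff_cancel_left]
      refine ⟨v, ?_, hBv.symm⟩
      intro hvD
      rw [symmDiff_singleton_of_mem hvD] at hBv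
      rwa [← hBv]
    · rintro ⟨v, hv, rfl⟩
      refine ⟨⟨symmDiff D {v}, isDomSet_symmDiff_singleton hD hv⟩, ?_, rfl⟩
      show (symmDiff D (symmDiff D {v})).ncard = 1
      rw [symmDiff_symmDiff_cancel_left]
      simp
  rw [h2]
  apply Set.ncard_image_of_injective
  intro v w hvw
  have : symmDiff D (symmDiff D {v}) = symmDiff D (symmDiff D {w}) := congrArg _ hvw
  rw [symmDiff_symmDiff_cancel_left, symmDiff_symmDiff_cancel_left] at this
  exact Set.singleton_eq_singleton_iff.mp this

lemma reachable_univ (A : {D : Set V // IsDomSet G D}) :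
    (DomGraph G).Reachable A ⟨Set.univ, isDomSet_univ⟩ := by
  classical
  suffices h : ∀ k (A : {D : Set V // IsDomSet G D}), (A.1ᶜ).ncard = k →
      (DomGraph G).Reachable A ⟨Set.univ, isDomSet_univ⟩ by
    exact h _ A rfl
  intro k
  induction k with
  | zero =>
    intro A hA
    have h0 : (A.1ᶜ) = ∅ := (Set.ncard_eq_zero (Set.toFinite _)).mp hA
    have h1 : A.1 = Set.univ := by
      rw [← Set.compl_empty, ← h0, compl_compl]
    have : A = ⟨Set.univ, isDomSet_univ⟩ := Subtype.ext h1
    rw [this]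
  | succ k ih =>
    intro A hA
    have hne : (A.1ᶜ).Nonempty := by
      by_contra h
      rw [Set.not_nonempty_iff_eq_empty] at h
      rw [h, Set.ncard_empty] at hA
      omega
    obtain ⟨v, hv⟩ := hne
    have hvA : v ∉ A.1 := hv
    set B : {D : Set V // IsDomSet G D} :=
      ⟨insert v A.1, isDomSet_superset (Set.subset_insert v A.1) A.2⟩ with hB
    have hadj : (DomGraph G).Adj A B := by
      show (symmDiff A.1 (insert v A.1)).ncard = 1
      rw [← symmDiff_singleton_of_not_mem hvA, symmDiff_symmDiff_cancel_left]
      simp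
    have hBc : (B.1ᶜ).ncard = k := by
      have : B.1ᶜ = A.1ᶜ \ {v} := by
        ext x; simp [hB, Set.mem_insert_iff, Set.mem_diff]; tauto
      rw [this, Set.ncard_diff_singleton_of_mem hv, hA]
      omega
    exact (hadj.reachable).trans (ih B hBc)

lemma domGraph_reachable (A B : {D : Set V // IsDomSet G D}) :
    (DomGraph G).Reachable A B :=
  (reachable_univ A).trans (reachable_univ B).symm

lemma exists_adj (hconn : G.Connected) (hn : 2 ≤ Fintype.card V) (v : V) :
    ∃ w, G.Adj v w := by
  obtain ⟨w, hw⟩ := Fintype.exists_ne_of_one_lt_card (by omega) v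
  obtain ⟨p⟩ := hconn.preconnected v w
  cases p with
  | nil => exact absurd rfl hw
  | cons h _ => exact ⟨_, h⟩

lemma ncard_compl (S : Set V) : (Sᶜ).ncard = Fintype.card V - S.ncard := by
  have := Set.ncard_add_ncard_compl S
  rw [Nat.card_eq_fintype_card] at this
  omega

/-- parity hypothesis extracted from Eulerian-ness -/
def ParityHyp (G : SimpleGraph V) : Prop :=
  ∀ D : Set V, IsDomSet G D → Even ((NbrV G D).ncard)

lemma even_card (hE : ParityHyp G) (hconn : G.Connected) (hn : 2 ≤ Fintype.card V) :
    Even (Fintype.card V) := by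
  have h1 : NbrV G Set.univ = Set.univ := by
    ext v
    simp only [NbrV, Set.mem_setOf_eq, Set.mem_univ, iff_true]
    intro _
    intro u hu
    have hu' : u = v := by
      by_contra h
      exact hu ⟨Set.mem_univ u, fun e => h (by simpa using e)⟩
    obtain ⟨w, hw⟩ := exists_adj hconn hn v
    refine ⟨w, ⟨Set.mem_univ w, ?_⟩, ?_⟩
    · simp only [Set.mem_singleton_iff]
      exact hw.ne'
    · rw [hu']; exact hw.symm
  have := hE Set.univ isDomSet_univ
  rw [h1] at this
  rwa [Set.ncard_univ, Nat.card_eq_fintype_card] at this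
lemma star_parity (hE : ParityHyp G) (hev : Even (Fintype.card V)) {a : ℕ}
    (hmax : ∀ v, (nonNbr G v).ncard ≤ a) {D' : Set V} (hD' : D'.ncard = a + 1) :
    Even ({w | w ∈ D' ∧ ∃ z, nonNbr G z = D' \ {w}}.ncard) := by
  classical
  have hdom : IsDomSet G D' := by
    intro v hv
    by_contra hno
    push_neg at hno
    have hsub : D' ⊆ nonNbr G v := by
      intro d hd
      exact ⟨fun e => hv (e ▸ hd), fun ha => hno d hd ha.symm⟩
    have := Set.ncard_le_ncard hsub (Set.toFinite _)
    have := hmax v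
    omega
  have key : ∀ w ∈ D', (¬ IsDomSet G (D' \ {w}) ↔ ∃ z, nonNbr G z = D' \ {w}) := by
    intro w hw
    constructor
    · intro hnd
      rw [IsDomSet] at hnd
      push_neg at hnd
      obtain ⟨u, hu, hu2⟩ := hnd
      have hsub : D' \ {w} ⊆ nonNbr G u := by
        intro d hd
        exact ⟨fun e => hu (e ▸ hd), fun ha => hu2 d hd ha.symm⟩
      have hcard : (D' \ {w}).ncard = a := by
        rw [Set.ncard_diff_singleton_of_mem hw, hD']
        omega
      have heq := Set.eq_of_subset_of_ncard_le hsub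
        (by rw [hcard]; exact hmax u) (Set.toFinite _)
      exact ⟨u, heq.symm⟩
    · rintro ⟨z, hz⟩ hdom'
      have hzmem : z ∉ D' \ {w} := by
        rw [← hz]; exact not_mem_nonNbr_self z
      obtain ⟨d, hd, hadj⟩ := hdom' z hzmem
      rw [← hz] at hd
      exact hd.2 hadj.symm
  have hcompl : NbrV G D' = {w | w ∈ D' ∧ ∃ z, nonNbr G z = D' \ {w}}ᶜ := by
    ext w
    simp only [NbrV, Set.mem_setOf_eq, Set.mem_compl_iff, not_and, not_exists]
    by_cases hw : w ∈ D'
    · have := key w hw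
      constructor
      · intro h _ z hz
        exact (this.mpr ⟨z, hz⟩) (h hw)
      · intro h
        intro _
        by_contra hnd
        obtain ⟨z, hz⟩ := this.mp hnd
        exact h hw z hz
    · constructor
      · intro _ hw'
        exact absurd hw' hw
      · intro _ hw'
        exact absurd hw' hw
  have hT := hE D' hdom
  rw [hcompl, ncard_compl] at hT
  have hle : ({w | w ∈ D' ∧ ∃ z, nonNbr G z = D' \ {w}}).ncard ≤ Fintype.card V := by
    have := Set.ncard_le_ncard (Set.subset_univ
      {w | w ∈ D' ∧ ∃ z, nonNbr G z = D' \ {w}}) (Set.toFinite _)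
    rwa [Set.ncard_univ, Nat.card_eq_fintype_card] at this
  rw [Nat.even_iff] at hT hev ⊢
  omega

lemma nonNbr_nonempty (hE : ParityHyp G) (hev : Even (Fintype.card V))
    (hn : 2 ≤ Fintype.card V) (v : V) : (nonNbr G v).Nonempty := by
  by_contra h
  rw [Set.not_nonempty_iff_eq_empty] at h
  have hall : ∀ w, w ≠ v → G.Adj v w := by
    intro w hw
    by_contra ha
    have : w ∈ nonNbr G v := ⟨hw, ha⟩
    rw [h] at this
    exact this
  have hD : IsDomSet G {v} := by
    intro u hu
    exact ⟨v, rfl, hall u (by simpa using hu)⟩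
  have h1 : NbrV G {v} = {v}ᶜ := by
    ext w
    simp only [NbrV, Set.mem_setOf_eq, Set.mem_compl_iff, Set.mem_singleton_iff]
    constructor
    · intro hw hwv
      subst hwv
      have hd := hw rfl
      rw [Set.diff_self] at hd
      obtain ⟨d, hd', _⟩ := hd w (Set.notMem_empty w)
      exact hd'
    · intro hw hw'
      exact absurd (by simpa using hw') hw
  have := hE {v} hD
  rw [h1, ncard_compl, Set.ncard_singleton] at this
  rw [Nat.even_iff] at this hev
  omega
lemma max_nonNbr_le_one (hE : ParityHyp G) (hconn : G.Connected) (hn : 2 ≤ Fintype.card V)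
    (hev : Even (Fintype.card V)) (u₀ : V)
    (hmax : ∀ v, (nonNbr G v).ncard ≤ (nonNbr G u₀).ncard) :
    (nonNbr G u₀).ncard ≤ 1 := by
  classical
  by_contra h2
  push_neg at h2
  set a := (nonNbr G u₀).ncard with ha
  set D := insert u₀ (nonNbr G u₀) with hDdef
  have hu0nn : u₀ ∉ nonNbr G u₀ := not_mem_nonNbr_self u₀
  have hu0D : u₀ ∈ D := Set.mem_insert _ _
  have hDcard : D.ncard = a + 1 := by
    rw [hDdef, Set.ncard_insert_of_notMem hu0nn (Set.toFinite _)]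
  have hDdiffu0 : D \ {u₀} = nonNbr G u₀ := by
    rw [hDdef, Set.insert_diff_self_of_notMem hu0nn]
  -- first application of the parity engine : find the twin x
  have hTeven := star_parity hE hev hmax hDcard
  have hu0T : u₀ ∈ {w | w ∈ D ∧ ∃ z, nonNbr G z = D \ {w}} :=
    ⟨hu0D, u₀, hDdiffu0.symm⟩
  have hTsub : ∀ w ∈ {w | w ∈ D ∧ ∃ z, nonNbr G z = D \ {w}},
      w = u₀ ∨ nonNbr G w = D \ {w} := by
    rintro w ⟨hwD, z, hz⟩
    by_cases hwu : w = u₀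
    · exact Or.inl hwu
    · right
      have hu0mem : u₀ ∈ D \ {w} := ⟨hu0D, fun e => hwu (by simpa using e.symm)⟩
      rw [← hz] at hu0mem
      have hzD : z ∈ D := by
        rw [hDdef]
        exact Set.mem_insert_of_mem _ (nonNbr_symm hu0mem)
      have hznot : z ∉ D \ {w} := by rw [← hz]; exact not_mem_nonNbr_self z
      have hzw : z = w := by
        by_contra hzw
        exact hznot ⟨hzD, by simpa using hzw⟩
      rw [hzw] at hz
      exact hz
  have hxex : ∃ x, x ∈ {w | w ∈ D ∧ ∃ z, nonNbr G z = D \ {w}} ∧ x ≠ u₀ := by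
    by_contra hx
    push_neg at hx
    have hT1 : {w | w ∈ D ∧ ∃ z, nonNbr G z = D \ {w}} = {u₀} :=
      Set.Subset.antisymm (fun w hw => hx w hw) (by simpa using hu0T)
    rw [hT1, Set.ncard_singleton] at hTeven
    exact (Nat.not_even_one) hTeven
  obtain ⟨x, hxT, hxne⟩ := hxex
  have hxnn : nonNbr G x = D \ {x} := (hTsub x hxT).resolve_left hxne
  have hxD : x ∈ D := hxT.1
  have hxnnu0 : x ∈ nonNbr G u₀ := by rw [← hDdiffu0]; exact ⟨hxD, by simpa using hxne⟩
  have hsD_of : ∀ {s : V}, s ∉ D → s ≠ u₀ ∧ s ≠ x := by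
    intro s hs
    constructor
    · intro e; exact hs (e ▸ hu0D)
    · intro e; exact hs (e ▸ hxD)
  set M := D \ {u₀, x} with hMdef
  have hMsubu0 : M ⊆ nonNbr G u₀ := by
    intro y hy
    rw [← hDdiffu0]
    exact ⟨hy.1, fun e => hy.2 (by simp at e; simp [e])⟩
  have hMsubx : M ⊆ nonNbr G x := by
    intro y hy
    rw [hxnn]
    exact ⟨hy.1, fun e => hy.2 (by simp at e; simp [e])⟩
  have hxM : x ∉ M := fun h => h.2 (by simp)
  have hu0M : u₀ ∉ M := fun h => h.2 (by simp)
  have hMne : M.Nonempty := by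
    have hMeq : M = nonNbr G u₀ \ {x} := by
      rw [hMdef, ← hDdiffu0]
      ext y
      simp only [Set.mem_diff, Set.mem_insert_iff, Set.mem_singleton_iff]
      tauto
    have : M.ncard = a - 1 := by
      rw [hMeq, Set.ncard_diff_singleton_of_mem hxnnu0]
    rw [← Set.ncard_pos (Set.toFinite _), this]
    omega
  have hOne : Dᶜ.Nonempty := by
    by_contra h
    rw [Set.not_nonempty_iff_eq_empty, ← Set.compl_univ, compl_inj_iff] at h
    obtain ⟨w, hadj⟩ := exists_adj hconn hn u₀
    have hwD : w ∈ D := h ▸ Set.mem_univ w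
    have : w ∈ nonNbr G u₀ := by
      rw [← hDdiffu0]; exact ⟨hwD, by simpa using hadj.ne'⟩
    exact this.2 hadj
  -- the key step : every outside vertex has a partner realizing insert s M
  have hD5 : ∀ s ∈ Dᶜ, ∃ z, nonNbr G z = insert s M ∧ z ∈ Dᶜ ∧ z ≠ s := by
    intro s hs
    have hsD : s ∉ D := hs
    obtain ⟨hsu0, hsx⟩ := hsD_of hsD
    set D2 := insert s (D \ {x}) with hD2def
    have hsDx : s ∉ D \ {x} := fun h => hsD h.1
    have hxD2 : x ∉ D2 := by
      rw [hD2def]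
      intro h
      rcases h with h | h
      · exact hsx h.symm
      · exact h.2 rfl
    have hD2card : D2.ncard = a + 1 := by
      rw [hD2def, Set.ncard_insert_of_notMem hsDx (Set.toFinite _),
        Set.ncard_diff_singleton_of_mem hxD, hDcard]
      omega
    have hT2even := star_parity hE hev hmax hD2card
    have hD2s : D2 \ {s} = D \ {x} := by
      rw [hD2def, Set.insert_diff_self_of_notMem hsDx]
    have hsT2 : s ∈ {w | w ∈ D2 ∧ ∃ z, nonNbr G z = D2 \ {w}} := by
      refine ⟨Set.mem_insert _ _, x, ?_⟩
      rw [hD2s, hxnn]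
    have hu0D2 : u₀ ∈ D2 := Set.mem_insert_of_mem _ ⟨hu0D, by simpa using hxne.symm⟩
    have hT2sub : ∀ w ∈ {w | w ∈ D2 ∧ ∃ z, nonNbr G z = D2 \ {w}},
        w = s ∨ w = u₀ := by
      rintro w ⟨hwD2, z, hz⟩
      by_contra hcon
      push_neg at hcon
      obtain ⟨hws, hwu0⟩ := hcon
      have hwDx : w ∈ D \ {x} := by
        rcases hwD2 with h | h
        · exact absurd h hws
        · exact h
      have hwM : w ∈ M := ⟨hwDx.1, by
        simp only [Set.mem_insert_iff, Set.mem_singleton_iff]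
        push_neg
        exact ⟨hwu0, fun e => hwDx.2 (by simpa using e)⟩⟩
      have hu0in : u₀ ∈ D2 \ {w} := ⟨hu0D2, by simpa using fun e => hwu0 e.symm⟩
      rw [← hz] at hu0in
      have hzDu0 : z ∈ nonNbr G u₀ := nonNbr_symm hu0in
      have hznot : z ∉ D2 \ {w} := by rw [← hz]; exact not_mem_nonNbr_self z
      by_cases hzx : z = x
      · have hsmem : s ∈ D2 \ {w} := ⟨Set.mem_insert _ _, by simpa using hws.symm⟩
        rw [← hz, hzx, hxnn] at hsmem
        exact hsD hsmem.1
      · have hzD2 : z ∈ D2 := by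
          refine Set.mem_insert_of_mem _ ⟨?_, by simpa using hzx⟩
          rw [← hDdiffu0] at hzDu0
          exact hzDu0.1
        have hzw : z = w := by
          by_contra hzw
          exact hznot ⟨hzD2, by simpa using hzw⟩
        have hxw : x ∈ nonNbr G w := nonNbr_symm (hMsubx hwM)
        rw [← hzw, hz] at hxw
        exact hxD2 hxw.1
    have hu0T2 : u₀ ∈ {w | w ∈ D2 ∧ ∃ z, nonNbr G z = D2 \ {w}} := by
      by_contra hu
      have hT2eq : {w | w ∈ D2 ∧ ∃ z, nonNbr G z = D2 \ {w}} = {s} := by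
        apply Set.Subset.antisymm
        · intro w hw
          rcases hT2sub w hw with h | h
          · simpa using h
          · exact absurd (h ▸ hw) hu
        · simpa using hsT2
      rw [hT2eq, Set.ncard_singleton] at hT2even
      exact Nat.not_even_one hT2even
    obtain ⟨_, z, hz⟩ := hu0T2
    have hD2u0 : D2 \ {u₀} = insert s M := by
      rw [hD2def, hMdef]
      ext y
      simp only [Set.mem_diff, Set.mem_insert_iff, Set.mem_singleton_iff]
      constructor
      · rintro ⟨h | h, hy⟩
        · exact Or.inl h
        · exact Or.inr ⟨h.1, by push_neg; exact ⟨hy, h.2⟩⟩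
      · rintro (h | h)
        · exact ⟨Or.inl h, h ▸ hsu0⟩
        · push_neg at h
          exact ⟨Or.inr ⟨h.1, h.2.2⟩, h.2.1⟩
    rw [hD2u0] at hz
    have hsz : s ∈ nonNbr G z := by rw [hz]; exact Set.mem_insert _ _
    have hzs : z ≠ s := fun e => not_mem_nonNbr_self s (e ▸ hsz)
    have hzD : z ∉ D := by
      intro hzD
      have hzcases : z = u₀ ∨ z = x ∨ z ∈ M := by
        by_cases h1 : z = u₀
        · exact Or.inl h1
        · by_cases h2 : z = x
          · exact Or.inr (Or.inl h2)
          · exact Or.inr (Or.inr ⟨hzD, by simp [h1, h2]⟩)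
      rcases hzcases with h | h | h
      · subst h
        rw [← hDdiffu0] at hsz
        exact hsD hsz.1
      · subst h
        rw [hxnn] at hsz
        exact hsD hsz.1
      · have hxz : x ∈ nonNbr G z := nonNbr_symm (hMsubx h)
        rw [hz] at hxz
        rcases hxz with h' | h'
        · exact hsx h'.symm
        · exact hxM h'
    exact ⟨z, hz, hzD, hzs⟩
  -- consequence : M is non-adjacent to everything outside M
  have hD6 : ∀ s ∈ Dᶜ, M ⊆ nonNbr G s := by
    intro s hs
    obtain ⟨z, hz, hzO, hzs⟩ := hD5 s hs
    obtain ⟨z', hz', hz'O, hz'z⟩ := hD5 z hzO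
    have hzz' : z ∈ nonNbr G z' := by rw [hz']; exact Set.mem_insert _ _
    have hz'mem : z' ∈ nonNbr G z := nonNbr_symm hzz'
    rw [hz] at hz'mem
    rcases hz'mem with h | h
    · subst h
      rw [hz']
      exact fun y hy => Set.mem_insert_of_mem _ hy
    · exfalso
      have hxz' : x ∈ nonNbr G z' := nonNbr_symm (hMsubx h)
      rw [hz'] at hxz'
      rcases hxz' with h' | h'
      · exact hzO (show z ∈ D by rw [← h']; exact hxD)
      · exact hxM h'
  -- M is closed under adjacency, contradicting connectivity
  have hcut : ∀ y ∈ M, ∀ c, G.Adj y c → c ∈ M := by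
    intro y hy c hadj
    by_contra hc
    by_cases hcD : c ∈ D
    · have hcases : c = u₀ ∨ c = x := by
        by_contra h
        push_neg at h
        exact hc ⟨hcD, by simp [h.1, h.2]⟩
      rcases hcases with h | h
      · subst h
        exact (hMsubu0 hy).2 hadj.symm
      · subst h
        exact (hMsubx hy).2 hadj.symm
    · exact (hD6 c hcD hy).2 hadj.symm
  have hstay : ∀ (p q : V) (w : G.Walk p q), p ∈ M → q ∈ M := by
    intro p q w
    induction w with
    | nil => exact id
    | cons h _ ih => exact fun hp => ih (hcut _ hp _ h)
  obtain ⟨y, hy⟩ := hMne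
  obtain ⟨w⟩ := hconn.preconnected y u₀
  exact hu0M (hstay y u₀ w hy)
lemma nonNbr_ncard_eq_one (hE : ParityHyp G) (hconn : G.Connected)
    (hn : 2 ≤ Fintype.card V) (hev : Even (Fintype.card V)) (v : V) :
    (nonNbr G v).ncard = 1 := by
  classical
  obtain ⟨u₀, _, hu₀⟩ := Finset.univ.exists_max_image (fun v => (nonNbr G v).ncard)
    ⟨v, Finset.mem_univ v⟩
  have hmax : ∀ w, (nonNbr G w).ncard ≤ (nonNbr G u₀).ncard :=
    fun w => hu₀ w (Finset.mem_univ w)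
  have h1 := max_nonNbr_le_one hE hconn hn hev u₀ hmax
  have h2 : 0 < (nonNbr G v).ncard :=
    (Set.ncard_pos (Set.toFinite _)).mpr (nonNbr_nonempty hE hev hn v)
  have := hmax v
  omega

theorem forward_dir (hE : ParityHyp G) (hconn : G.Connected) (hn : 2 ≤ Fintype.card V) :
    Even (Fintype.card V) ∧ 4 ≤ Fintype.card V ∧
      ∃ f : V → V, Function.Involutive f ∧ (∀ v, f v ≠ v) ∧
        ∀ u v, G.Adj u v ↔ u ≠ v ∧ f u ≠ v := by
  classical
  have hev := even_card hE hconn hn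
  have hone := nonNbr_ncard_eq_one hE hconn hn hev
  have hsingle : ∀ v : V, ∃ w, nonNbr G v = {w} :=
    fun v => Set.ncard_eq_one.mp (hone v)
  set f : V → V := fun v => (hsingle v).choose with hfdef
  have hf : ∀ v, nonNbr G v = {f v} := fun v => (hsingle v).choose_spec
  have hfmem : ∀ v, f v ∈ nonNbr G v := fun v => by rw [hf v]; rfl
  have hfne : ∀ v, f v ≠ v := fun v => (hfmem v).1
  have hinv : Function.Involutive f := by
    intro v
    have h1 : v ∈ nonNbr G (f v) := nonNbr_symm (hfmem v)
    rw [hf (f v)] at h1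
    exact (Set.mem_singleton_iff.mp h1).symm
  have hadj : ∀ u v, G.Adj u v ↔ u ≠ v ∧ f u ≠ v := by
    intro u v
    constructor
    · intro h
      refine ⟨h.ne, fun e => ?_⟩
      have : v ∈ nonNbr G u := by rw [hf u, ← e]; rfl
      exact this.2 h
    · rintro ⟨hne, hfu⟩
      by_contra hna
      have : v ∈ nonNbr G u := ⟨hne.symm, hna⟩
      rw [hf u] at this
      exact hfu (Set.mem_singleton_iff.mp this).symm
  refine ⟨hev, ?_, f, hinv, hfne, hadj⟩
  -- the graph has at least 3, hence (evenness) at least 4 vertices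
  have hne : Nonempty V := Fintype.card_pos_iff.mp (by omega)
  obtain ⟨v0⟩ := hne
  obtain ⟨z, hz⟩ := exists_adj hconn hn v0
  have h3 : 2 < Fintype.card V := by
    rw [Fintype.two_lt_card_iff]
    exact ⟨v0, f v0, z, fun e => hfne v0 e.symm, hz.ne, ((hadj v0 z).mp hz).2⟩
  rw [Nat.even_iff] at hev
  omega
section Backward

variable {f : V → V}

lemma cp_isDomSet_iff (hn4 : 4 ≤ Fintype.card V) (hinv : Function.Involutive f)
    (hfne : ∀ v, f v ≠ v) (hadj : ∀ u v, G.Adj u v ↔ u ≠ v ∧ f u ≠ v) (D : Set V) :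
    IsDomSet G D ↔ 2 ≤ D.ncard := by
  constructor
  · intro hdom
    by_contra h
    push_neg at h
    rcases Nat.le_one_iff_eq_zero_or_eq_one.mp (by omega : D.ncard ≤ 1) with h0 | h1
    · rw [Set.ncard_eq_zero (Set.toFinite _)] at h0
      subst h0
      have hne : Nonempty V := Fintype.card_pos_iff.mp (by omega)
      obtain ⟨v⟩ := hne
      obtain ⟨d, hd, _⟩ := hdom v (Set.notMem_empty v)
      exact hd
    · obtain ⟨v, hv⟩ := Set.ncard_eq_one.mp h1
      subst hv
      obtain ⟨d, hd, hda⟩ := hdom (f v) (by simpa using hfne v)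
      rw [Set.mem_singleton_iff] at hd
      subst hd
      exact ((hadj d (f d)).mp hda).2 rfl
  · intro h2 v hv
    obtain ⟨d1, d2, hd1, hd2, hne⟩ := (Set.one_lt_ncard_iff (Set.toFinite _)).mp
      (by omega : 1 < D.ncard)
    by_cases ha : G.Adj d1 v
    · exact ⟨d1, hd1, ha⟩
    · refine ⟨d2, hd2, ?_⟩
      have hfd1 : f d1 = v := by
        have := (hadj d1 v).not.mp ha
        push_neg at this
        exact this (fun e => hv (e ▸ hd1))
      rw [hadj]
      refine ⟨fun e => hv (e ▸ hd2), fun e => ?_⟩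
      exact hne (hinv.injective (by rw [hfd1, e]))
  -- d2 ≠ v since d2 ∈ D; f d2 = v = f d1 would give d1 = d2

lemma cp_parity (hev : Even (Fintype.card V)) (hn4 : 4 ≤ Fintype.card V)
    (hinv : Function.Involutive f) (hfne : ∀ v, f v ≠ v)
    (hadj : ∀ u v, G.Adj u v ↔ u ≠ v ∧ f u ≠ v) : ParityHyp G := by
  intro D hD
  have hdom_iff := cp_isDomSet_iff (G := G) hn4 hinv hfne hadj
  have h2 : 2 ≤ D.ncard := (hdom_iff D).mp hD
  by_cases h3 : 3 ≤ D.ncard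
  · have h1 : NbrV G D = Set.univ := by
      ext v
      simp only [NbrV, Set.mem_setOf_eq, Set.mem_univ, iff_true]
      intro hv
      apply (hdom_iff _).mpr
      rw [Set.ncard_diff_singleton_of_mem hv]
      omega
    rw [h1, Set.ncard_univ, Nat.card_eq_fintype_card]
    exact hev
  · have h1 : NbrV G D = Dᶜ := by
      ext v
      simp only [NbrV, Set.mem_setOf_eq, Set.mem_compl_iff]
      constructor
      · intro hv hvD
        have hd := (hdom_iff _).mp (hv hvD)
        rw [Set.ncard_diff_singleton_of_mem hvD] at hd
        omega
      · intro hv hvD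
        exact absurd hvD hv
    rw [h1, ncard_compl]
    rw [Nat.even_iff] at hev ⊢
    have : D.ncard = 2 := by omega
    omega

end Backward

end DomAux

/-- Characterization of the connected graphs with an Eulerian dominating graph: the
dominating graph of a connected graph `G` on `n ≥ 2` vertices is Eulerian iff `n` is
even and `G` is the cocktail party graph on `n ≥ 4` vertices. -/
theorem domGraph_eulerian_iff_cocktailParty {V : Type*} [Fintype V] (G : SimpleGraph V)
    (hconn : G.Connected) (hn : 2 ≤ Fintype.card V) :
    IsEulerian (DomGraph G) ↔
      Even (Fintype.card V) ∧ 4 ≤ Fintype.card V ∧ IsCocktailParty G := by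
  classical
  constructor
  · rintro ⟨hdeg, -⟩
    have hE : DomAux.ParityHyp G := by
      intro D hD
      have h := hdeg ⟨D, hD⟩
      rwa [DomAux.ncard_neighborSet D hD] at h
    obtain ⟨h1, h2, f, hf⟩ := DomAux.forward_dir hE hconn hn
    exact ⟨h1, h2, f, hf⟩
  · rintro ⟨hev, hn4, f, hinv, hfne, hadj⟩
    have hE := DomAux.cp_parity (G := G) hev hn4 hinv hfne hadj
    constructor
    · rintro ⟨D, hD⟩
      rw [DomAux.ncard_neighborSet D hD]
      exact hE D hD
    · intro u v x y _ _
      exact DomAux.domGraph_reachable u x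
end

section
/- Let n ≥ 4 be an even integer and let H_n be the cocktail party graph on n vertices. Then every vertex of the dominating graph D(H_n) has even degree; in particular, D(H_n) is Eulerian. -/
open SimpleGraph

lemma domset_iff_aux {V : Type*} [Fintype V] (G : SimpleGraph V)
    (hn : 2 ≤ Fintype.card V)
    (f : V → V) (hf : Function.Involutive f) (hfix : ∀ v, f v ≠ v)
    (hadj : ∀ u v, G.Adj u v ↔ u ≠ v ∧ f u ≠ v) (D : Set V) :
    IsDomSet G D ↔ 2 ≤ D.ncard := by
  constructor
  · intro h
    by_contra hlt
    push_neg at hlt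
    interval_cases hD : D.ncard
    · have hD' : D = ∅ := (Set.ncard_eq_zero (Set.toFinite _)).mp hD
      have : Nonempty V := Fintype.card_pos_iff.mp (by omega)
      obtain ⟨v⟩ := this
      obtain ⟨u, hu, -⟩ := h v (by simp [hD'])
      simp [hD'] at hu
    · obtain ⟨u, hu⟩ := Set.ncard_eq_one.mp hD
      obtain ⟨w, hw, hadjw⟩ := h (f u) (by simp [hu, hfix u])
      rw [hu, Set.mem_singleton_iff] at hw
      subst hw
      exact ((hadj w (f w)).mp hadjw).2 rfl
  · intro h v hv
    obtain ⟨a, b, ha, hb, hab⟩ := (Set.one_lt_ncard_iff (s := D) (Set.toFinite _)).mp (by omega)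
    by_cases hfa : f a = v
    · refine ⟨b, hb, (hadj b v).mpr ⟨fun hbv => hv (hbv ▸ hb), fun hfb => ?_⟩⟩
      exact hab (hf.injective (hfa.trans hfb.symm))
    · exact ⟨a, ha, (hadj a v).mpr ⟨fun hav => hv (hav ▸ ha), hfa⟩⟩

lemma symmDiff_singleton_mem_aux {V : Type*} {D : Set V} {v : V} (hv : v ∈ D) :
    symmDiff D {v} = D \ {v} := by
  ext x
  by_cases hx : x = v <;> simp [Set.mem_symmDiff, hx, hv]

lemma symmDiff_singleton_not_mem_aux {V : Type*} {D : Set V} {v : V} (hv : v ∉ D) :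
    symmDiff D {v} = insert v D := by
  ext x
  by_cases hx : x = v <;> simp [Set.mem_symmDiff, hx, hv]

/-- Every vertex of the dominating graph of a cocktail party graph on an even number
`n ≥ 4` of vertices has even degree; in particular, the dominating graph is Eulerian. -/
theorem domGraph_cocktailParty_eulerian {V : Type*} [Fintype V] (G : SimpleGraph V)
    (hn : 4 ≤ Fintype.card V) (hne : Even (Fintype.card V)) (hG : IsCocktailParty G) :
    (∀ d : {D : Set V // IsDomSet G D}, Even ((DomGraph G).neighborSet d).ncard) ∧
    IsEulerian (DomGraph G) := by
  obtain ⟨f, hf, hfix, hadj⟩ := hG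
  have hdom : ∀ D : Set V, IsDomSet G D ↔ 2 ≤ D.ncard :=
    domset_iff_aux G (by omega) f hf hfix hadj
  have heven : ∀ d : {D : Set V // IsDomSet G D},
      Even ((DomGraph G).neighborSet d).ncard := by
    intro d
    set S : Set V := {v | IsDomSet G (symmDiff d.1 {v})} with hS
    have hcard : ((DomGraph G).neighborSet d).ncard = S.ncard := by
      rw [← Nat.card_coe_set_eq, ← Nat.card_coe_set_eq]
      refine Nat.card_congr (Equiv.ofBijective
        (fun v : S => (⟨⟨symmDiff d.1 {v.1}, v.2⟩, ?_⟩ : (DomGraph G).neighborSet d))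
        ⟨?_, ?_⟩).symm
      · show (symmDiff d.1 (symmDiff d.1 {v.1})).ncard = 1
        rw [symmDiff_symmDiff_cancel_left, Set.ncard_singleton]
      · intro v w hvw
        have h1 : symmDiff d.1 {v.1} = symmDiff d.1 {w.1} :=
          congrArg (fun E => E.1.1) hvw
        have := symmDiff_right_inj.mp h1
        exact Subtype.ext (Set.singleton_eq_singleton_iff.mp this)
      · rintro ⟨E, hE⟩
        have hE' : (symmDiff d.1 E.1).ncard = 1 := hE
        obtain ⟨v, hv⟩ := Set.ncard_eq_one.mp hE'
        have hEeq : E.1 = symmDiff d.1 {v} := by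
          rw [← hv, symmDiff_symmDiff_cancel_left]
        have hvS : v ∈ S := by
          show IsDomSet G (symmDiff d.1 {v})
          rw [← hEeq]; exact E.2
        exact ⟨⟨v, hvS⟩, Subtype.ext (Subtype.ext hEeq.symm)⟩
    rw [hcard]
    have hd2 : 2 ≤ d.1.ncard := (hdom d.1).mp d.2
    by_cases h3 : 3 ≤ d.1.ncard
    · have hSuniv : S = Set.univ := by
        ext v
        simp only [Set.mem_univ, iff_true, hS, Set.mem_setOf_eq, hdom]
        by_cases hv : v ∈ d.1
        · rw [symmDiff_singleton_mem_aux hv, Set.ncard_diff_singleton_of_mem hv]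
          omega
        · rw [symmDiff_singleton_not_mem_aux hv, Set.ncard_insert_of_notMem hv]
          omega
      rw [hSuniv, Set.ncard_univ, Nat.card_eq_fintype_card]
      exact hne
    · have hScompl : S = d.1ᶜ := by
        ext v
        simp only [hS, Set.mem_setOf_eq, Set.mem_compl_iff, hdom]
        by_cases hv : v ∈ d.1
        · rw [symmDiff_singleton_mem_aux hv, Set.ncard_diff_singleton_of_mem hv]
          simp [hv]; omega
        · rw [symmDiff_singleton_not_mem_aux hv, Set.ncard_insert_of_notMem hv]
          simp [hv]; omega
      rw [hScompl]
      have := Set.ncard_add_ncard_compl d.1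
      rw [Nat.card_eq_fintype_card] at this
      have hd : d.1.ncard = 2 := by omega
      obtain ⟨m, hm⟩ := hne
      refine ⟨m - 1, by omega⟩
  refine ⟨heven, heven, ?_⟩
  have htop : IsDomSet G Set.univ := fun v hv => absurd (Set.mem_univ v) hv
  have key : ∀ k (d : {D : Set V // IsDomSet G D}), (d.1ᶜ).ncard = k →
      (DomGraph G).Reachable d ⟨Set.univ, htop⟩ := by
    intro k
    induction k with
    | zero =>
      intro d hd
      have h1 : d.1ᶜ = ∅ := (Set.ncard_eq_zero (Set.toFinite _)).mp hd
      have h2 : d.1 = Set.univ := by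
        rw [← Set.compl_empty, ← h1, compl_compl]
      have : d = ⟨Set.univ, htop⟩ := Subtype.ext h2
      rw [this]
    | succ k ih =>
      intro d hd
      obtain ⟨v, hv⟩ := Set.nonempty_of_ncard_ne_zero (s := d.1ᶜ) (by omega)
      have hvd : v ∉ d.1 := hv
      have hdom' : IsDomSet G (insert v d.1) := by
        rw [hdom]
        have := Set.ncard_le_ncard (Set.subset_insert v d.1) (Set.toFinite _)
        have := (hdom d.1).mp d.2
        omega
      have hadj' : (DomGraph G).Adj d ⟨insert v d.1, hdom'⟩ := by
        show (symmDiff d.1 (insert v d.1)).ncard = 1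
        have : symmDiff d.1 (insert v d.1) = {v} := by
          ext x
          by_cases hx : x = v <;> simp [Set.mem_symmDiff, hx, hvd]
        rw [this, Set.ncard_singleton]
      have hcompl : ((insert v d.1)ᶜ).ncard = k := by
        have h1 : (insert v d.1)ᶜ = d.1ᶜ \ {v} := by
          ext x; simp [Set.mem_insert_iff]; tauto
        rw [h1, Set.ncard_diff_singleton_of_mem hv]
        omega
      exact hadj'.reachable.trans (ih _ hcompl)
  intro u v x y _ _
  exact (key _ u rfl).trans (key _ x rfl).symm
end

section
/- Let n and k be integers with n ≥ 3 and ⌈n/3⌉ < k < n, and let P_n denote the path on n vertices. Then the k-dominating graph D_k(P_n) is Eulerian if and only if n = 4 and k = 3. -/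
open SimpleGraph

/-! ### Auxiliary machinery -/

/-- The set of vertices whose toggle keeps us among dominating sets of size `≤ k`. -/
def TogSet {V : Type*} (G : SimpleGraph V) (k : ℕ) (A : Set V) : Set V :=
  {v | IsDomSet G (symmDiff A {v}) ∧ (symmDiff A {v}).ncard ≤ k}

lemma ncard_neighborSet_eq {V : Type*} (G : SimpleGraph V) (k : ℕ)
    (A : {D : Set V // IsDomSet G D ∧ D.ncard ≤ k}) :
    ((KDomGraph G k).neighborSet A).ncard = (TogSet G k A.1).ncard := by
  have hinj : Function.Injective (fun v : V => symmDiff A.1 {v}) := by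
    intro v w h
    have h2 : ({v} : Set V) = {w} := by
      simpa [symmDiff_symmDiff_cancel_left] using congrArg (fun s => symmDiff A.1 s) h
    simpa using h2
  have key : Subtype.val '' ((KDomGraph G k).neighborSet A)
      = (fun v : V => symmDiff A.1 {v}) '' (TogSet G k A.1) := by
    ext B
    constructor
    · rintro ⟨⟨B, hB⟩, hAdj, rfl⟩
      have h1 : (symmDiff A.1 B).ncard = 1 := hAdj
      obtain ⟨v, hv⟩ := Set.ncard_eq_one.mp h1
      have hBv : B = symmDiff A.1 {v} := by
        rw [← hv, symmDiff_symmDiff_cancel_left]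
      exact ⟨v, ⟨hBv ▸ hB.1, hBv ▸ hB.2⟩, hBv.symm⟩
    · rintro ⟨v, ⟨h1, h2⟩, rfl⟩
      refine ⟨⟨symmDiff A.1 {v}, h1, h2⟩, ?_, rfl⟩
      show (symmDiff A.1 (symmDiff A.1 {v})).ncard = 1
      rw [symmDiff_symmDiff_cancel_left]
      simp
  calc ((KDomGraph G k).neighborSet A).ncard
      = (Subtype.val '' ((KDomGraph G k).neighborSet A)).ncard :=
        (Set.ncard_image_of_injective _ Subtype.val_injective).symm
    _ = ((fun v : V => symmDiff A.1 {v}) '' (TogSet G k A.1)).ncard := by rw [key]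
    _ = (TogSet G k A.1).ncard := Set.ncard_image_of_injective _ hinj

section TogSetLemmas

variable {V : Type*} {G : SimpleGraph V} {k : ℕ} {A : Set V} {v : V}

lemma symmDiff_singleton_of_mem_s9 (hv : v ∈ A) : symmDiff A {v} = A \ {v} := by
  ext w
  simp only [Set.mem_symmDiff, Set.mem_singleton_iff, Set.mem_diff]
  constructor
  · rintro (⟨h1, h2⟩ | ⟨rfl, h2⟩)
    · exact ⟨h1, h2⟩
    · exact absurd hv h2
  · rintro ⟨h1, h2⟩
    exact Or.inl ⟨h1, h2⟩

lemma symmDiff_singleton_of_not_mem_s9 (hv : v ∉ A) : symmDiff A {v} = insert v A := by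
  ext w
  simp only [Set.mem_symmDiff, Set.mem_singleton_iff, Set.mem_insert_iff]
  constructor
  · rintro (⟨h1, _⟩ | ⟨rfl, _⟩)
    · exact Or.inr h1
    · exact Or.inl rfl
  · rintro (rfl | h)
    · exact Or.inr ⟨rfl, hv⟩
    · exact Or.inl ⟨h, fun hw => hv (hw ▸ h)⟩

lemma IsDomSet.insert' (hA : IsDomSet G A) : IsDomSet G (insert v A) := by
  intro w hw
  obtain ⟨u, hu, hadj⟩ := hA w (fun h => hw (Set.mem_insert_of_mem _ h))
  exact ⟨u, Set.mem_insert_of_mem _ hu, hadj⟩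

lemma mem_TogSet_of_mem [Finite V] (hAk : A.ncard ≤ k) (hv : v ∈ A) :
    v ∈ TogSet G k A ↔ IsDomSet G (A \ {v}) := by
  rw [TogSet, Set.mem_setOf_eq, symmDiff_singleton_of_mem_s9 hv]
  exact ⟨fun h => h.1,
    fun h => ⟨h, le_trans (Set.ncard_le_ncard Set.diff_subset (Set.toFinite A)) hAk⟩⟩

lemma mem_TogSet_of_not_mem [Finite V] (hA : IsDomSet G A) (hv : v ∉ A) :
    v ∈ TogSet G k A ↔ A.ncard + 1 ≤ k := by
  rw [TogSet, Set.mem_setOf_eq, symmDiff_singleton_of_not_mem_s9 hv,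
    Set.ncard_insert_of_notMem hv (Set.toFinite A)]
  exact ⟨fun h => h.2, fun h => ⟨hA.insert', h⟩⟩

lemma TogSet_eq_compl [Finite V] (hA : IsDomSet G A) (hc : A.ncard + 1 ≤ k)
    (h : ∀ v ∈ A, ¬ IsDomSet G (A \ {v})) : TogSet G k A = Aᶜ := by
  ext v
  by_cases hv : v ∈ A
  · simp only [Set.mem_compl_iff, hv, not_true_eq_false, iff_false]
    rw [mem_TogSet_of_mem (le_trans (Nat.le_succ _) hc) hv]
    exact h v hv
  · simp only [Set.mem_compl_iff, hv, not_false_eq_true, iff_true]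
    rw [mem_TogSet_of_not_mem hA hv]
    exact hc

lemma TogSet_eq_of_max [Finite V] (hA : IsDomSet G A) (hk : A.ncard = k) :
    TogSet G k A = {v ∈ A | IsDomSet G (A \ {v})} := by
  ext v
  by_cases hv : v ∈ A
  · rw [mem_TogSet_of_mem hk.le hv]
    simp [hv]
  · rw [mem_TogSet_of_not_mem hA hv]
    simp [hv]
    omega

end TogSetLemmas

/-! ### Counting -/

lemma ncard_setOf_val (n : ℕ) (p : ℕ → Prop) [DecidablePred p] :
    {v : Fin n | p v.val}.ncard = ((Finset.range n).filter p).card := by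
  rw [← Set.ncard_coe_finset]
  have h : ((Finset.range n).filter p : Set ℕ) = Fin.val '' {v : Fin n | p v.val} := by
    ext j
    simp only [Finset.coe_filter, Finset.mem_range, Set.mem_setOf_eq, Set.mem_image]
    constructor
    · rintro ⟨hj, hp⟩
      exact ⟨⟨j, hj⟩, hp, rfl⟩
    · rintro ⟨w, hw, rfl⟩
      exact ⟨w.isLt, hw⟩
  rw [h, Set.ncard_image_of_injective _ Fin.val_injective]

lemma ncard_compl_setOf (n : ℕ) (p : ℕ → Prop) [DecidablePred p] :
    ({v : Fin n | p v.val}ᶜ).ncard = n - ((Finset.range n).filter p).card := by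
  have h := Set.ncard_add_ncard_compl {v : Fin n | p v.val}
  rw [ncard_setOf_val] at h
  have h2 : Nat.card (Fin n) = n := by simp
  omega

lemma cnt1 (N : ℕ) : ((Finset.range N).filter (fun j => j % 3 = 1)).card = (N + 1) / 3 := by
  induction N with
  | zero => simp
  | succ N ih =>
    rw [Finset.range_add_one, Finset.filter_insert]
    split_ifs with h
    · rw [Finset.card_insert_of_notMem (by simp)]; omega
    · omega

lemma cnt0 (N : ℕ) : ((Finset.range N).filter (fun j => j % 3 = 0)).card = (N + 2) / 3 := by
  induction N with
  | zero => simp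
  | succ N ih =>
    rw [Finset.range_add_one, Finset.filter_insert]
    split_ifs with h
    · rw [Finset.card_insert_of_notMem (by simp)]; omega
    · omega

lemma cntB (m : ℕ) (hm : 1 ≤ m) :
    ((Finset.range (3*m)).filter (fun j => j % 3 = 0 ∨ j = 3*m - 1)).card = m + 1 := by
  have he : (Finset.range (3*m)).filter (fun j => j % 3 = 0 ∨ j = 3*m - 1)
      = insert (3*m - 1) ((Finset.range (3*m)).filter (fun j => j % 3 = 0)) := by
    ext j
    simp only [Finset.mem_filter, Finset.mem_range, Finset.mem_insert]
    omega
  rw [he, Finset.card_insert_of_notMem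
    (by simp only [Finset.mem_filter, Finset.mem_range]; omega), cnt0]
  omega

lemma cntC (m : ℕ) (hm : 1 ≤ m) :
    ((Finset.range (3*m)).filter (fun j => j % 3 = 1 ∨ j = 0)).card = m + 1 := by
  have he : (Finset.range (3*m)).filter (fun j => j % 3 = 1 ∨ j = 0)
      = insert 0 ((Finset.range (3*m)).filter (fun j => j % 3 = 1)) := by
    ext j
    simp only [Finset.mem_filter, Finset.mem_range, Finset.mem_insert]
    omega
  rw [he, Finset.card_insert_of_notMem
    (by simp only [Finset.mem_filter, Finset.mem_range]; omega), cnt1]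
  omega

lemma cntD (m : ℕ) (hm : 1 ≤ m) :
    ((Finset.range (3*m+1)).filter (fun j => j % 3 = 1 ∨ j = 0 ∨ j = 3*m)).card = m + 2 := by
  have he : (Finset.range (3*m+1)).filter (fun j => j % 3 = 1 ∨ j = 0 ∨ j = 3*m)
      = insert 0 (insert (3*m) ((Finset.range (3*m+1)).filter (fun j => j % 3 = 1))) := by
    ext j
    simp only [Finset.mem_filter, Finset.mem_range, Finset.mem_insert]
    omega
  rw [he, Finset.card_insert_of_notMem
      (by simp only [Finset.mem_insert, Finset.mem_filter, Finset.mem_range]; omega),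
    Finset.card_insert_of_notMem
      (by simp only [Finset.mem_filter, Finset.mem_range]; omega), cnt1]
  omega

lemma cntA (N : ℕ) (hN : 7 ≤ N) :
    ((Finset.range N).filter (fun j => j = 0 ∨ j = 2 ∨ j = 4 ∨ (j % 3 = 0 ∧ 6 ≤ j))).card
      = (N + 2) / 3 + 1 := by
  induction N, hN using Nat.le_induction with
  | base => decide
  | succ N hN ih =>
    rw [Finset.range_add_one, Finset.filter_insert]
    split_ifs with h
    · rw [Finset.card_insert_of_notMem (by simp)]; omega
    · omega

/-! ### Path domination helpers -/

lemma isDomSet_setOf (n : ℕ) (p : ℕ → Prop)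
    (h : ∀ j < n, ¬ p j → ∃ i < n, p i ∧ (i + 1 = j ∨ j + 1 = i)) :
    IsDomSet (pathGraph n) {v : Fin n | p v.val} := by
  intro v hv
  obtain ⟨i, hi, hpi, hadj⟩ := h v.val v.isLt (by simpa using hv)
  exact ⟨⟨i, hi⟩, hpi, pathGraph_adj.mpr hadj⟩

lemma not_isDomSet_witness (n : ℕ) (D : Set (Fin n)) (w : Fin n) (hw : w ∉ D)
    (h : ∀ u ∈ D, ¬ (u.val + 1 = w.val ∨ w.val + 1 = u.val)) :
    ¬ IsDomSet (pathGraph n) D := by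
  intro hD
  obtain ⟨u, hu, hadj⟩ := hD w hw
  exact h u hu (pathGraph_adj.mp hadj)

-- finset bridge
def domF (n : ℕ) (s : Finset (Fin n)) : Prop :=
  ∀ v : Fin n, v ∉ s → ∃ u ∈ s, u.val + 1 = v.val ∨ v.val + 1 = u.val

instance (n : ℕ) : DecidablePred (domF n) := fun s => by unfold domF; infer_instance

lemma isDomSet_coe {n : ℕ} (s : Finset (Fin n)) :
    IsDomSet (pathGraph n) ↑s ↔ domF n s := by
  unfold IsDomSet domF
  simp [pathGraph_adj]

lemma TogSet_coe {n k : ℕ} (s : Finset (Fin n)) :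
    TogSet (pathGraph n) k ↑s
      = ↑(Finset.univ.filter
          (fun v => domF n (symmDiff s {v}) ∧ (symmDiff s {v}).card ≤ k)) := by
  ext v
  have h1 : symmDiff (↑s) ({v} : Set (Fin n)) = ↑(symmDiff s {v}) := by
    rw [Finset.coe_symmDiff, Finset.coe_singleton]
  rw [TogSet, Finset.mem_coe, Finset.mem_filter, Set.mem_setOf_eq, h1,
    Set.ncard_coe_finset, isDomSet_coe]
  simp

lemma even4 : ∀ s : Finset (Fin 4), domF 4 s → s.card ≤ 3 →
    Even ((Finset.univ.filter
      (fun v => domF 4 (symmDiff s {v}) ∧ (symmDiff s {v}).card ≤ 3)).card) := by decide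

lemma class4 : ∀ s : Finset (Fin 4), domF 4 s → s.card ≤ 3 →
    s = {0,2} ∨ s = {0,3} ∨ s = {1,2} ∨ s = {1,3} ∨
    s = {0,1,2} ∨ s = {0,1,3} ∨ s = {0,2,3} ∨ s = {1,2,3} := by decide

def vtx (s : Finset (Fin 4)) (h1 : domF 4 s) (h2 : s.card ≤ 3) :
    {D : Set (Fin 4) // IsDomSet (pathGraph 4) D ∧ D.ncard ≤ 3} :=
  ⟨↑s, (isDomSet_coe s).mpr h1, by rw [Set.ncard_coe_finset]; exact h2⟩

lemma vtx_adj {s t : Finset (Fin 4)} {h1 h2 h3 h4} (h : (symmDiff s t).card = 1) :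
    (KDomGraph (pathGraph 4) 3).Adj (vtx s h1 h2) (vtx t h3 h4) := by
  show (symmDiff (↑s : Set (Fin 4)) ↑t).ncard = 1
  rw [← Finset.coe_symmDiff, Set.ncard_coe_finset]
  exact h

lemma reach_all (A : {D : Set (Fin 4) // IsDomSet (pathGraph 4) D ∧ D.ncard ≤ 3}) :
    (KDomGraph (pathGraph 4) 3).Reachable A (vtx {0,2} (by decide) (by decide)) := by
  obtain ⟨s, hs⟩ : ∃ s : Finset (Fin 4), ↑s = A.1 :=
    ⟨(Set.toFinite A.1).toFinset, (Set.toFinite A.1).coe_toFinset⟩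
  have hdom : domF 4 s := (isDomSet_coe s).mp (hs ▸ A.2.1)
  have hcard : s.card ≤ 3 := by
    rw [← Set.ncard_coe_finset, hs]; exact A.2.2
  have hA : A = vtx s hdom hcard := Subtype.ext hs.symm
  rw [hA]
  have w1 : (KDomGraph (pathGraph 4) 3).Reachable
      (vtx {0,1,2} (by decide) (by decide)) (vtx {0,2} (by decide) (by decide)) :=
    (vtx_adj (by decide)).reachable
  have w2 : (KDomGraph (pathGraph 4) 3).Reachable
      (vtx {1,2} (by decide) (by decide)) (vtx {0,2} (by decide) (by decide)) :=
    (vtx_adj (by decide) : (KDomGraph (pathGraph 4) 3).Adj (vtx {1,2} _ _) (vtx {0,1,2} (by decide) (by decide))).reachable.trans w1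
  have w3 : (KDomGraph (pathGraph 4) 3).Reachable
      (vtx {1,2,3} (by decide) (by decide)) (vtx {0,2} (by decide) (by decide)) :=
    (vtx_adj (by decide) : (KDomGraph (pathGraph 4) 3).Adj (vtx {1,2,3} _ _) (vtx {1,2} (by decide) (by decide))).reachable.trans w2
  have w4 : (KDomGraph (pathGraph 4) 3).Reachable
      (vtx {1,3} (by decide) (by decide)) (vtx {0,2} (by decide) (by decide)) :=
    (vtx_adj (by decide) : (KDomGraph (pathGraph 4) 3).Adj (vtx {1,3} _ _) (vtx {1,2,3} (by decide) (by decide))).reachable.trans w3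
  have w5 : (KDomGraph (pathGraph 4) 3).Reachable
      (vtx {0,1,3} (by decide) (by decide)) (vtx {0,2} (by decide) (by decide)) :=
    (vtx_adj (by decide) : (KDomGraph (pathGraph 4) 3).Adj (vtx {0,1,3} _ _) (vtx {1,3} (by decide) (by decide))).reachable.trans w4
  have w6 : (KDomGraph (pathGraph 4) 3).Reachable
      (vtx {0,3} (by decide) (by decide)) (vtx {0,2} (by decide) (by decide)) :=
    (vtx_adj (by decide) : (KDomGraph (pathGraph 4) 3).Adj (vtx {0,3} _ _) (vtx {0,1,3} (by decide) (by decide))).reachable.trans w5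
  have w7 : (KDomGraph (pathGraph 4) 3).Reachable
      (vtx {0,2,3} (by decide) (by decide)) (vtx {0,2} (by decide) (by decide)) :=
    (vtx_adj (by decide) : (KDomGraph (pathGraph 4) 3).Adj (vtx {0,2,3} _ _) (vtx {0,2} (by decide) (by decide))).reachable.trans Reachable.rfl
  rcases class4 s hdom hcard with rfl | rfl | rfl | rfl | rfl | rfl | rfl | rfl
  · exact Reachable.rfl
  · exact w6
  · exact w2
  · exact w4
  · exact w1
  · exact w5
  · exact w7
  · exact w3


lemma odd_deg_contra (n k : ℕ) (p : ℕ → Prop)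
    (hdom : IsDomSet (pathGraph n) {v : Fin n | p v.val})
    (hck : {v : Fin n | p v.val}.ncard ≤ k)
    (hodd : ¬ Even ((TogSet (pathGraph n) k {v : Fin n | p v.val}).ncard))
    (heven : ∀ A, Even (((KDomGraph (pathGraph n) k).neighborSet A).ncard)) : False :=
  hodd (by rw [← ncard_neighborSet_eq (pathGraph n) k ⟨_, hdom, hck⟩]; exact heven _)

/-- For `n ≥ 3` and `⌈n/3⌉ < k < n`, the `k`-dominating graph of the path `P_n` is
Eulerian iff `n = 4` and `k = 3`. -/
theorem kDomGraph_path_eulerian_iff (n k : ℕ) (hn : 3 ≤ n)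
    (hk1 : (n + 2) / 3 < k) (hk2 : k < n) :
    IsEulerian (KDomGraph (SimpleGraph.pathGraph n) k) ↔ n = 4 ∧ k = 3 := by
  constructor
  · intro hE
    by_contra hne
    have heven := hE.1
    exfalso
    rcases (by omega : n % 3 = 0 ∨ n % 3 = 1 ∨ n % 3 = 2) with hmod | hmod | hmod
    · -- n = 3m
      obtain ⟨m, rfl⟩ : ∃ m, n = 3 * m := ⟨n / 3, by omega⟩
      have hm : 1 ≤ m := by omega
      have hγ : (3 * m + 2) / 3 = m := by omega
      rcases (by omega : k = m + 1 ∨ m + 2 ≤ k) with hk | hk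
      · -- maximal-size set {0} ∪ {j ≡ 1 mod 3}
        set p : ℕ → Prop := fun j => j % 3 = 1 ∨ j = 0 with hp
        have hdom : IsDomSet (pathGraph (3*m)) {v : Fin (3*m) | p v.val} := by
          apply isDomSet_setOf
          intro j hj hpj
          rw [hp] at hpj
          push_neg at hpj
          rcases (by omega : j % 3 = 0 ∨ j % 3 = 2) with h | h
          · exact ⟨j + 1, by omega, by left; omega, by omega⟩
          · exact ⟨j - 1, by omega, by left; omega, by omega⟩
        have hcard : {v : Fin (3*m) | p v.val}.ncard = m + 1 := by
          rw [ncard_setOf_val]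
          exact cntC m hm
        have hTog : TogSet (pathGraph (3*m)) k {v : Fin (3*m) | p v.val}
            = {(⟨0, by omega⟩ : Fin (3*m))} := by
          rw [TogSet_eq_of_max hdom (by omega)]
          ext v
          simp only [Set.mem_sep_iff, Set.mem_setOf_eq, Set.mem_singleton_iff]
          constructor
          · rintro ⟨hv, hvdom⟩
            by_contra hne0
            have hv0 : v.val ≠ 0 := fun h => hne0 (Fin.ext h)
            have hv1 : v.val % 3 = 1 := by rcases hv with h | h; exact h; omega
            refine not_isDomSet_witness (3*m) _ ⟨v.val + 1, by omega⟩ ?_ ?_ hvdom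
            · rintro ⟨hmem, -⟩
              rcases hmem with h | h <;> simp_all <;> omega
            · rintro u ⟨hu, hune⟩ hadj
              have hune' : u.val ≠ v.val := fun h => hune (by simp [Fin.ext h])
              have hu' : u.val % 3 = 1 ∨ u.val = 0 := hu
              simp only at hadj
              omega
          · rintro rfl
            refine ⟨Or.inr rfl, ?_⟩
            have hs : {v : Fin (3*m) | p v.val} \ {⟨0, by omega⟩}
                = {v : Fin (3*m) | v.val % 3 = 1} := by
              ext u
              simp only [Set.mem_diff, Set.mem_setOf_eq, Set.mem_singleton_iff, Fin.ext_iff, hp]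
              omega
            rw [hs]
            apply isDomSet_setOf (3*m) (fun j => j % 3 = 1)
            intro j hj hpj
            rcases (by omega : j % 3 = 0 ∨ j % 3 = 2) with h | h
            · exact ⟨j + 1, by omega, by omega, by omega⟩
            · exact ⟨j - 1, by omega, by omega, by omega⟩
        exact odd_deg_contra (3*m) k p hdom (by omega)
          (by rw [hTog, Set.ncard_singleton]; decide) heven
      · -- small set {j ≡ 0 mod 3} ∪ {3m-1}, independent
        set p : ℕ → Prop := fun j => j % 3 = 0 ∨ j = 3*m - 1 with hp
        have hdom : IsDomSet (pathGraph (3*m)) {v : Fin (3*m) | p v.val} := by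
          apply isDomSet_setOf
          intro j hj hpj
          rw [hp] at hpj
          push_neg at hpj
          rcases (by omega : j % 3 = 1 ∨ j % 3 = 2) with h | h
          · exact ⟨j - 1, by omega, by left; omega, by omega⟩
          · exact ⟨j + 1, by omega, by left; omega, by omega⟩
        have hcard : {v : Fin (3*m) | p v.val}.ncard = m + 1 := by
          rw [ncard_setOf_val]
          exact cntB m hm
        have hTog : TogSet (pathGraph (3*m)) k {v : Fin (3*m) | p v.val}
            = {v : Fin (3*m) | p v.val}ᶜ := by
          apply TogSet_eq_compl hdom (by omega)
          intro v hv
          refine not_isDomSet_witness (3*m) _ v (by simp) ?_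
          rintro u ⟨hu, hune⟩ hadj
          have hune' : u.val ≠ v.val := fun h => hune (by simp [Fin.ext h])
          have hu' : u.val % 3 = 0 ∨ u.val = 3*m - 1 := hu
          have hv' : v.val % 3 = 0 ∨ v.val = 3*m - 1 := hv
          have := u.isLt
          have := v.isLt
          omega
        refine odd_deg_contra (3*m) k p hdom (by omega) ?_ heven
        rw [hTog, ncard_compl_setOf, cntB m hm]
        rw [Nat.even_iff]
        omega
    · -- n = 3m+1
      obtain ⟨m, rfl⟩ : ∃ m, n = 3 * m + 1 := ⟨n / 3, by omega⟩
      have hm : 2 ≤ m := by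
        rcases (by omega : m = 1 ∨ 2 ≤ m) with h | h
        · exfalso; apply hne; constructor <;> omega
        · exact h
      have hγ : (3 * m + 3) / 3 = m + 1 := by omega
      rcases (by omega : k = m + 2 ∨ m + 3 ≤ k) with hk | hk
      · -- maximal-size set {0, 3m} ∪ {j ≡ 1 mod 3}
        set p : ℕ → Prop := fun j => j % 3 = 1 ∨ j = 0 ∨ j = 3*m with hp
        have hdom : IsDomSet (pathGraph (3*m+1)) {v : Fin (3*m+1) | p v.val} := by
          apply isDomSet_setOf
          intro j hj hpj
          rw [hp] at hpj
          push_neg at hpj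
          rcases (by omega : j % 3 = 0 ∨ j % 3 = 2) with h | h
          · exact ⟨j + 1, by omega, by left; omega, by omega⟩
          · exact ⟨j - 1, by omega, by left; omega, by omega⟩
        have hcard : {v : Fin (3*m+1) | p v.val}.ncard = m + 2 := by
          rw [ncard_setOf_val]
          exact cntD m (by omega)
        have hTog : TogSet (pathGraph (3*m+1)) k {v : Fin (3*m+1) | p v.val}
            = {(⟨0, by omega⟩ : Fin (3*m+1))} := by
          rw [TogSet_eq_of_max hdom (by omega)]
          ext v
          simp only [Set.mem_sep_iff, Set.mem_setOf_eq, Set.mem_singleton_iff]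
          constructor
          · rintro ⟨hv, hvdom⟩
            by_contra hne0
            have hv0 : v.val ≠ 0 := fun h => hne0 (Fin.ext h)
            rcases (by omega : v.val = 3*m ∨ (v.val % 3 = 1 ∧ v.val = 3*m - 2)
                ∨ (v.val % 3 = 1 ∧ v.val ≠ 3*m - 2)) with hc | hc | hc
            · -- witness v itself
              refine not_isDomSet_witness (3*m+1) _ v (by simp) ?_ hvdom
              rintro u ⟨hu, hune⟩ hadj
              have hune' : u.val ≠ v.val := fun h => hune (by simp [Fin.ext h])
              have hu' : u.val % 3 = 1 ∨ u.val = 0 ∨ u.val = 3*m := hu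
              have := u.isLt
              omega
            · -- witness v - 1 = 3m - 3
              refine not_isDomSet_witness (3*m+1) _ ⟨v.val - 1, by omega⟩ ?_ ?_ hvdom
              · rintro ⟨hmem, -⟩
                have hmem' : (v.val - 1) % 3 = 1 ∨ v.val - 1 = 0 ∨ v.val - 1 = 3*m := hmem
                omega
              · rintro u ⟨hu, hune⟩ hadj
                have hune' : u.val ≠ v.val := fun h => hune (by simp [Fin.ext h])
                have hu' : u.val % 3 = 1 ∨ u.val = 0 ∨ u.val = 3*m := hu
                simp only at hadj
                have := u.isLt
                omega
            · -- witness v + 1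
              refine not_isDomSet_witness (3*m+1) _ ⟨v.val + 1, by omega⟩ ?_ ?_ hvdom
              · rintro ⟨hmem, -⟩
                rcases hmem with h | h | h <;> simp_all <;> omega
              · rintro u ⟨hu, hune⟩ hadj
                have hune' : u.val ≠ v.val := fun h => hune (by simp [Fin.ext h])
                have hu' : u.val % 3 = 1 ∨ u.val = 0 ∨ u.val = 3*m := hu
                simp only at hadj
                have := u.isLt
                omega
          · rintro rfl
            refine ⟨Or.inr (Or.inl rfl), ?_⟩
            have hs : {v : Fin (3*m+1) | p v.val} \ {⟨0, by omega⟩}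
                = {v : Fin (3*m+1) | v.val % 3 = 1 ∨ v.val = 3*m} := by
              ext u
              simp only [Set.mem_diff, Set.mem_setOf_eq, Set.mem_singleton_iff, Fin.ext_iff, hp]
              omega
            rw [hs]
            apply isDomSet_setOf (3*m+1) (fun j => j % 3 = 1 ∨ j = 3*m)
            intro j hj hpj
            push_neg at hpj
            rcases (by omega : j % 3 = 0 ∨ j % 3 = 2) with h | h
            · exact ⟨j + 1, by omega, by left; omega, by omega⟩
            · exact ⟨j - 1, by omega, by left; omega, by omega⟩
        exact odd_deg_contra (3*m+1) k p hdom (by omega)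
          (by rw [hTog, Set.ncard_singleton]; decide) heven
      · -- small independent set {0,2,4} ∪ {j ≡ 0 mod 3, j ≥ 6}
        set p : ℕ → Prop := fun j => j = 0 ∨ j = 2 ∨ j = 4 ∨ (j % 3 = 0 ∧ 6 ≤ j) with hp
        have hdom : IsDomSet (pathGraph (3*m+1)) {v : Fin (3*m+1) | p v.val} := by
          apply isDomSet_setOf
          intro j hj hpj
          rw [hp] at hpj
          push_neg at hpj
          rcases (by omega : j = 1 ∨ j = 3 ∨ j = 5 ∨ (j % 3 = 1 ∧ 7 ≤ j)
              ∨ (j % 3 = 2 ∧ 8 ≤ j)) with h | h | h | h | h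
          · exact ⟨0, by omega, by left; omega, by omega⟩
          · exact ⟨4, by omega, by right; right; left; omega, by omega⟩
          · exact ⟨4, by omega, by right; right; left; omega, by omega⟩
          · exact ⟨j - 1, by omega, by right; right; right; omega, by omega⟩
          · exact ⟨j + 1, by omega, by right; right; right; omega, by omega⟩
        have hcard : {v : Fin (3*m+1) | p v.val}.ncard = m + 2 := by
          rw [ncard_setOf_val, cntA (3*m+1) (by omega)]
          omega
        have hTog : TogSet (pathGraph (3*m+1)) k {v : Fin (3*m+1) | p v.val}
            = {v : Fin (3*m+1) | p v.val}ᶜ := by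
          apply TogSet_eq_compl hdom (by omega)
          intro v hv
          refine not_isDomSet_witness (3*m+1) _ v (by simp) ?_
          rintro u ⟨hu, hune⟩ hadj
          have hune' : u.val ≠ v.val := fun h => hune (by simp [Fin.ext h])
          have hu' : u.val = 0 ∨ u.val = 2 ∨ u.val = 4 ∨ (u.val % 3 = 0 ∧ 6 ≤ u.val) := hu
          have hv' : v.val = 0 ∨ v.val = 2 ∨ v.val = 4 ∨ (v.val % 3 = 0 ∧ 6 ≤ v.val) := hv
          omega
        refine odd_deg_contra (3*m+1) k p hdom (by omega) ?_ heven
        rw [hTog, ncard_compl_setOf, cntA (3*m+1) (by omega), Nat.even_iff]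
        omega
    · -- n = 3m+2
      obtain ⟨m, rfl⟩ : ∃ m, n = 3 * m + 2 := ⟨n / 3, by omega⟩
      have hm : 1 ≤ m := by omega
      set p : ℕ → Prop := fun j => j % 3 = 1 with hp
      have hdom : IsDomSet (pathGraph (3*m+2)) {v : Fin (3*m+2) | p v.val} := by
        apply isDomSet_setOf
        intro j hj hpj
        rcases (by omega : j % 3 = 0 ∨ j % 3 = 2) with h | h
        · exact ⟨j + 1, by omega, by omega, by omega⟩
        · exact ⟨j - 1, by omega, by omega, by omega⟩
      have hcard : {v : Fin (3*m+2) | p v.val}.ncard = m + 1 := by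
        rw [ncard_setOf_val, cnt1]
        omega
      have hTog : TogSet (pathGraph (3*m+2)) k {v : Fin (3*m+2) | p v.val}
          = {v : Fin (3*m+2) | p v.val}ᶜ := by
        apply TogSet_eq_compl hdom (by omega)
        intro v hv
        refine not_isDomSet_witness (3*m+2) _ v (by simp) ?_
        rintro u ⟨hu, hune⟩ hadj
        have hune' : u.val ≠ v.val := fun h => hune (by simp [Fin.ext h])
        have hu' : u.val % 3 = 1 := hu
        have hv' : v.val % 3 = 1 := hv
        omega
      refine odd_deg_contra (3*m+2) k p hdom (by omega) ?_ heven
      rw [hTog, ncard_compl_setOf, cnt1, Nat.even_iff]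
      omega
  · rintro ⟨rfl, rfl⟩
    constructor
    · intro A
      rw [ncard_neighborSet_eq]
      obtain ⟨s, hs⟩ : ∃ s : Finset (Fin 4), ↑s = A.1 :=
        ⟨(Set.toFinite A.1).toFinset, (Set.toFinite A.1).coe_toFinset⟩
      have hdom : domF 4 s := (isDomSet_coe s).mp (hs ▸ A.2.1)
      have hcard : s.card ≤ 3 := by
        rw [← Set.ncard_coe_finset, hs]; exact A.2.2
      rw [← hs, TogSet_coe, Set.ncard_coe_finset]
      exact even4 s hdom hcard
    · intro u v x y hu hx
      exact (reach_all u).trans (reach_all x).symm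
end

section
/- Let n and k be integers with n ≥ 2 and 1 < k ≤ n, and let K_{1,n} denote the star (the complete bipartite graph with parts of sizes 1 and n). Then the k-dominating graph D_k(K_{1,n}) is Eulerian if and only if n is even and k is odd. -/
open SimpleGraph

namespace StarAux

variable {n k : ℕ}

abbrev V (n : ℕ) := Fin 1 ⊕ Fin n

abbrev G (n : ℕ) : SimpleGraph (V n) := completeBipartiteGraph (Fin 1) (Fin n)

abbrev c : V n := Sum.inl 0

abbrev L : Set (V n) := Set.range Sum.inr

lemma symmDiff_singleton_mem {α : Type*} {A : Set α} {v : α} (h : v ∈ A) :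
    symmDiff A {v} = A \ {v} := by
  ext x; simp [Set.mem_symmDiff]; by_cases hx : x = v <;> simp [hx] <;> tauto

lemma symmDiff_singleton_not_mem {α : Type*} {A : Set α} {v : α} (h : v ∉ A) :
    symmDiff A {v} = insert v A := by
  ext x; simp [Set.mem_symmDiff]; by_cases hx : x = v <;> simp [hx] <;> tauto

lemma L_ncard : (L : Set (V n)).ncard = n := by
  rw [L, ← Set.image_univ, Set.ncard_image_of_injective _ Sum.inr_injective, Set.ncard_univ]
  simp

lemma c_not_mem_L : (c : V n) ∉ (L : Set (V n)) := by simp [L, c]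

lemma dom_iff (hn : 1 ≤ n) (D : Set (V n)) :
    IsDomSet (G n) D ↔ (c ∈ D ∨ D = L) := by
  constructor
  · intro h
    by_cases hc : (c : V n) ∈ D
    · exact Or.inl hc
    · right
      ext v
      cases v with
      | inl x =>
        have : x = 0 := Subsingleton.elim x 0
        subst this
        simp only [L, Set.mem_range]
        constructor
        · intro hv; exact absurd hv hc
        · rintro ⟨i, hi⟩; exact absurd hi.symm (by simp)
      | inr i =>
        simp only [L, Set.mem_range]
        constructor
        · intro _; exact ⟨i, rfl⟩
        · rintro ⟨j, hj⟩
          by_contra hvi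
          obtain ⟨u, hu, hadj⟩ := h _ hvi
          cases u with
          | inl x =>
            have : x = 0 := Subsingleton.elim x 0
            subst this
            exact hc hu
          | inr j' => simp [completeBipartiteGraph] at hadj
  · rintro (hc | rfl)
    · intro v hv
      cases v with
      | inl x =>
        have : x = 0 := Subsingleton.elim x 0
        subst this
        exact absurd hc hv
      | inr i => exact ⟨c, hc, by simp [completeBipartiteGraph]⟩
    · intro v hv
      cases v with
      | inl x =>
        exact ⟨Sum.inr ⟨0, hn⟩, ⟨⟨0, hn⟩, rfl⟩, by simp [completeBipartiteGraph]⟩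
      | inr i => exact absurd ⟨i, rfl⟩ hv

/-- The target set for the degree computation. -/
def T (k : ℕ) (A : Set (V n)) : Set (V n) :=
  {v | IsDomSet (G n) (symmDiff A {v}) ∧ (symmDiff A {v}).ncard ≤ k}

lemma neighborSet_ncard (A : {D : Set (V n) // IsDomSet (G n) D ∧ D.ncard ≤ k}) :
    ((KDomGraph (G n) k).neighborSet A).ncard = (T k A.1).ncard := by
  have hval : Subtype.val '' ((KDomGraph (G n) k).neighborSet A)
      = (fun v => symmDiff A.1 {v}) '' (T k A.1) := by
    ext S
    constructor
    · rintro ⟨B, hB, rfl⟩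
      have hadj : (symmDiff A.1 B.1).ncard = 1 := hB
      obtain ⟨v, hv⟩ := Set.ncard_eq_one.mp hadj
      have hBeq : B.1 = symmDiff A.1 {v} := by
        rw [← hv, symmDiff_symmDiff_cancel_left]
      refine ⟨v, ⟨?_, ?_⟩, hBeq.symm⟩
      · rw [← hBeq]; exact B.2.1
      · rw [← hBeq]; exact B.2.2
    · rintro ⟨v, hv, rfl⟩
      refine ⟨⟨symmDiff A.1 {v}, hv.1, hv.2⟩, ?_, rfl⟩
      show (symmDiff A.1 (symmDiff A.1 {v})).ncard = 1
      rw [symmDiff_symmDiff_cancel_left]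
      simp
  have h1 : ((KDomGraph (G n) k).neighborSet A).ncard
      = (Subtype.val '' ((KDomGraph (G n) k).neighborSet A)).ncard :=
    (Set.ncard_image_of_injective _ Subtype.val_injective).symm
  rw [h1, hval, Set.ncard_image_of_injective]
  intro v w hvw
  have : ({v} : Set (V n)) = {w} := by
    have := congrArg (fun S => symmDiff A.1 S) hvw
    simpa [symmDiff_symmDiff_cancel_left] using
      congrArg (symmDiff A.1) hvw
  simpa using this

lemma c_notin_T (hn : 2 ≤ n) (hk2 : k ≤ n) {A : Set (V n)} (hc : c ∈ A)
    (hA : A.ncard ≤ k) : (c : V n) ∉ T k A := by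
  rintro ⟨hdom, -⟩
  rw [symmDiff_singleton_mem hc] at hdom
  rcases (dom_iff (by omega) _).mp hdom with h | h
  · exact h.2 rfl
  · have h1 : (A \ {c}).ncard = A.ncard - 1 := Set.ncard_diff_singleton_of_mem hc
    have h2 : (A \ {c}).ncard = n := by rw [h]; exact L_ncard
    have hpos : 1 ≤ A.ncard := (Set.ncard_pos (Set.toFinite _)).mpr ⟨c, hc⟩
    omega

lemma T_eq_of_lt (hn : 2 ≤ n) (hk2 : k ≤ n) {A : Set (V n)} (hc : c ∈ A)
    (hA : A.ncard ≤ k) (hlt : A.ncard < k) : T k A = L := by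
  ext v
  cases v with
  | inl x =>
    have : x = 0 := Subsingleton.elim x 0
    subst this
    simp only [Set.mem_range]
    constructor
    · intro h; exact absurd h (c_notin_T hn hk2 hc hA)
    · rintro ⟨i, hi⟩; exact absurd hi.symm (by simp)
  | inr i =>
    constructor
    · intro _; exact ⟨i, rfl⟩
    · intro _
      by_cases hvi : Sum.inr i ∈ A
      · constructor
        · rw [symmDiff_singleton_mem hvi]
          refine (dom_iff (by omega) _).mpr (Or.inl ⟨hc, by simp⟩)
        · rw [symmDiff_singleton_mem hvi, Set.ncard_diff_singleton_of_mem hvi]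
          omega
      · constructor
        · rw [symmDiff_singleton_not_mem hvi]
          exact (dom_iff (by omega) _).mpr (Or.inl (Set.mem_insert_of_mem _ hc))
        · rw [symmDiff_singleton_not_mem hvi, Set.ncard_insert_of_notMem hvi]
          omega

lemma T_eq_of_eq (hn : 2 ≤ n) (hk2 : k ≤ n) {A : Set (V n)} (hc : c ∈ A)
    (heq : A.ncard = k) : T k A = A \ {c} := by
  ext v
  cases v with
  | inl x =>
    have : x = 0 := Subsingleton.elim x 0
    subst this
    constructor
    · intro h; exact absurd h (c_notin_T hn hk2 hc (le_of_eq heq))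
    · intro h; exact absurd rfl h.2
  | inr i =>
    by_cases hvi : Sum.inr i ∈ A
    · constructor
      · intro _; exact ⟨hvi, by simp⟩
      · intro _
        constructor
        · rw [symmDiff_singleton_mem hvi]
          exact (dom_iff (by omega) _).mpr (Or.inl ⟨hc, by simp⟩)
        · rw [symmDiff_singleton_mem hvi, Set.ncard_diff_singleton_of_mem hvi]
          omega
    · constructor
      · rintro ⟨-, hcard⟩
        rw [symmDiff_singleton_not_mem hvi, Set.ncard_insert_of_notMem hvi] at hcard
        omega
      · intro h; exact absurd h.1 hvi

lemma T_L (hn : 2 ≤ n) (hk2 : k ≤ n) : T k (L : Set (V n)) = ∅ := by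
  ext v
  simp only [Set.mem_empty_iff_false, iff_false]
  cases v with
  | inl x =>
    have : x = 0 := Subsingleton.elim x 0
    subst this
    rintro ⟨-, hcard⟩
    rw [symmDiff_singleton_not_mem c_not_mem_L, Set.ncard_insert_of_notMem c_not_mem_L,
      L_ncard] at hcard
    omega
  | inr i =>
    rintro ⟨hdom, -⟩
    rw [symmDiff_singleton_mem (show Sum.inr i ∈ (L : Set (V n)) from ⟨i, rfl⟩)] at hdom
    rcases (dom_iff (by omega) _).mp hdom with h | h
    · rcases h.1 with ⟨j, hj⟩; exact absurd hj.symm (by simp)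
    · have : Sum.inr i ∈ (L : Set (V n)) \ {Sum.inr i} := by rw [h]; exact ⟨i, rfl⟩
      exact this.2 rfl

lemma mem_c_of_adj (hn : 2 ≤ n) (hk2 : k ≤ n)
    {A B : {D : Set (V n) // IsDomSet (G n) D ∧ D.ncard ≤ k}}
    (h : (KDomGraph (G n) k).Adj A B) : c ∈ A.1 := by
  rcases (dom_iff (by omega) _).mp A.2.1 with hc | hL
  · exact hc
  · exfalso
    have hadj : (symmDiff A.1 B.1).ncard = 1 := h
    obtain ⟨v, hv⟩ := Set.ncard_eq_one.mp hadj
    have hBeq : B.1 = symmDiff A.1 {v} := by rw [← hv, symmDiff_symmDiff_cancel_left]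
    have hvT : v ∈ T k A.1 := ⟨hBeq ▸ B.2.1, hBeq ▸ B.2.2⟩
    rw [hL, T_L hn hk2] at hvT
    exact hvT

lemma center_vertex (hk1 : 1 ≤ k) :
    IsDomSet (G n) {c} ∧ ({c} : Set (V n)).ncard ≤ k := by
  constructor
  · intro v hv
    cases v with
    | inl x =>
      have : x = 0 := Subsingleton.elim x 0
      subst this
      exact absurd rfl hv
    | inr i => exact ⟨c, rfl, by simp [completeBipartiteGraph]⟩
  · simp [hk1]

lemma reach_center (hn : 2 ≤ n) (hk1 : 1 < k) :
    ∀ m (A : {D : Set (V n) // IsDomSet (G n) D ∧ D.ncard ≤ k}), c ∈ A.1 → A.1.ncard = m →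
      (KDomGraph (G n) k).Reachable A ⟨{c}, center_vertex (by omega)⟩ := by
  intro m
  induction m using Nat.strong_induction_on with
  | _ m ih =>
    intro A hc hcard
    by_cases hA : A.1 = {c}
    · have : A = ⟨{c}, center_vertex (by omega)⟩ := Subtype.ext hA
      rw [this]
    · have hss : ({c} : Set (V n)) ⊂ A.1 :=
        ⟨Set.singleton_subset_iff.mpr hc, fun h => hA (Set.Subset.antisymm h (Set.singleton_subset_iff.mpr hc))⟩
      obtain ⟨v, hvA, hvc⟩ := Set.exists_of_ssubset hss
      have hvc' : v ≠ c := by simpa using hvc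
      set B : Set (V n) := A.1 \ {v} with hB
      have hcB : c ∈ B := ⟨hc, fun h => hvc' (by simpa using h.symm ▸ rfl)⟩
      have hdomB : IsDomSet (G n) B := by
        refine (dom_iff ?_ _).mpr (Or.inl hcB)
        omega
      have hcardB : B.ncard = m - 1 := by
        rw [hB, Set.ncard_diff_singleton_of_mem hvA, hcard]
      have hfin : A.1.Finite := Set.toFinite _
      have hmpos : 1 ≤ m := by
        rw [← hcard]; exact (Set.ncard_pos (Set.toFinite _)).mpr ⟨c, hc⟩
      have hBle : B.ncard ≤ k := by
        have h := A.2.2; rw [hcardB]; omega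
      have hadj : (KDomGraph (G n) k).Adj A ⟨B, hdomB, hBle⟩ := by
        show (symmDiff A.1 B).ncard = 1
        have : symmDiff A.1 B = {v} := by
          rw [hB]
          ext x
          simp [Set.mem_symmDiff]
          by_cases hx : x = v <;> simp [hx] <;> tauto
        rw [this]; simp
      have hm2 : 2 ≤ m := by
        rw [← hcard]
        have : ({c, v} : Set (V n)).ncard ≤ A.1.ncard := by
          apply Set.ncard_le_ncard _ hfin
          intro x hx
          rcases hx with h | h
          · exact h ▸ hc
          · exact h ▸ hvA
        have h2 : ({c, v} : Set (V n)).ncard = 2 := by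
          rw [Set.ncard_pair (Ne.symm hvc')]
        omega
      exact hadj.reachable.trans (ih (m - 1) (by omega) ⟨B, hdomB, hBle⟩ hcB hcardB)

end StarAux


open StarAux in
/-- For `n ≥ 2` and `1 < k ≤ n`, the `k`-dominating graph of the star `K_{1,n}` is
Eulerian iff `n` is even and `k` is odd. -/
theorem kDomGraph_star_eulerian_iff (n k : ℕ) (hn : 2 ≤ n) (hk1 : 1 < k) (hk2 : k ≤ n) :
    IsEulerian (KDomGraph (completeBipartiteGraph (Fin 1) (Fin n)) k) ↔
      Even n ∧ Odd k := by
  constructor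
  · rintro ⟨hdeg, -⟩
    constructor
    · -- degree of {c} is n
      have h1 := hdeg ⟨{c}, center_vertex (by omega)⟩
      rw [neighborSet_ncard] at h1
      have h1' : Even (T k ({c} : Set (V n))).ncard := h1
      rw [T_eq_of_lt (A := ({c} : Set (V n))) hn hk2 rfl
        (by rw [Set.ncard_singleton]; omega) (by rw [Set.ncard_singleton]; omega),
        L_ncard] at h1'
      exact h1'
    · -- vertex of size k has degree k - 1
      obtain ⟨S, -, hS⟩ := Set.exists_subset_card_eq (s := (Set.univ : Set (Fin n))) (n := k - 1)
        (by rw [Set.ncard_univ]; simp; omega)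
      set A : Set (V n) := insert c (Sum.inr '' S) with hA
      have hcim : (c : V n) ∉ Sum.inr '' S := by simp [c]
      have hAcard : A.ncard = k := by
        rw [hA, Set.ncard_insert_of_notMem hcim,
          Set.ncard_image_of_injective _ Sum.inr_injective, hS]
        omega
      have hcA : c ∈ A := Set.mem_insert _ _
      have hdom : IsDomSet (G n) A := (dom_iff (by omega) _).mpr (Or.inl hcA)
      have h1 := hdeg ⟨A, hdom, le_of_eq hAcard⟩
      rw [neighborSet_ncard] at h1
      have h1' : Even (T k A).ncard := h1
      rw [T_eq_of_eq hn hk2 hcA hAcard,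
        Set.ncard_diff_singleton_of_mem hcA, hAcard] at h1'
      have h1 := h1'
      have : k = (k - 1) + 1 := by omega
      rw [this]
      exact h1.add_one
  · rintro ⟨hne, hko⟩
    constructor
    · intro A
      rw [neighborSet_ncard]
      rcases (dom_iff (by omega) _).mp A.2.1 with hc | hL
      · rcases lt_or_eq_of_le A.2.2 with hlt | heq
        · rw [T_eq_of_lt hn hk2 hc A.2.2 hlt, L_ncard]; exact hne
        · rw [T_eq_of_eq hn hk2 hc heq, Set.ncard_diff_singleton_of_mem hc, heq]
          rcases hko with ⟨m, hm⟩
          exact ⟨m, by omega⟩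
      · rw [hL, T_L hn hk2]
        simp
    · intro u v x y huv hxy
      have hu : c ∈ u.1 := mem_c_of_adj hn hk2 huv
      have hx : c ∈ x.1 := mem_c_of_adj hn hk2 hxy
      exact (reach_center hn hk1 _ u hu rfl).trans (reach_center hn hk1 _ x hx rfl).symm
end
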